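/- arXiv:1607.06267 — 4 statements merged into one kernel-verified Lean document; each statement's English description precedes it below -/
import Mathlib

section
/- Let μ, ν be positive finite Borel measures on ℝⁿ and ℝᵐ respectively, each without atoms, and suppose each admits a Fourier frame (i.e., there exist countable sets U ⊂ ℝⁿ, V ⊂ ℝᵐ such that the exponential systems E(U), E(V) are frames in L²(μ), L²(ν) respectively). Then the measure ρ = μ × δ₀ + δ₀ × ν on ℝⁿ⁺ᵐ = ℝⁿ × ℝᵐ also admits a Fourier frame. -/
open MeasureTheory Complex

noncomputable def fexp {d : ℕ} (l x : EuclideanSpace ℝ (Fin d)) : ℂ :=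
  Complex.exp (((2 * Real.pi * (inner ℝ l x : ℝ) : ℝ) : ℂ) * Complex.I)

noncomputable def fourierM {d : ℕ} (μ : Measure (EuclideanSpace ℝ (Fin d)))
    (t : EuclideanSpace ℝ (Fin d)) : ℂ :=
  ∫ x, Complex.exp ((((-2) * Real.pi * (inner ℝ t x : ℝ) : ℝ) : ℂ) * Complex.I) ∂μ

/-- the system `e i` is a frame in `L²(μ)` with lower bound `A` and upper bound `B`. -/
def IsFrameWith {α : Type*} [MeasurableSpace α] (μ : Measure α)
    {ι : Type*} (e : ι → α → ℂ) (A B : ℝ) : Prop :=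
  ∀ f : α → ℂ, MeasureTheory.MemLp f 2 μ →
    A * ∫ x, ‖f x‖ ^ 2 ∂μ ≤ (∑' i, ‖∫ x, f x * (starRingEnd ℂ) (e i x) ∂μ‖ ^ 2) ∧
    (∑' i, ‖∫ x, f x * (starRingEnd ℂ) (e i x) ∂μ‖ ^ 2) ≤ B * ∫ x, ‖f x‖ ^ 2 ∂μ

/-- `μ` admits a Fourier frame: a countable set `Λ ⊆ ℝ^d` of frequencies such that
the exponential system `E(Λ)` is a frame in `L²(μ)`. -/
def HasFourierFrame {d : ℕ} (μ : Measure (EuclideanSpace ℝ (Fin d))) : Prop :=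
  ∃ Λ : Set (EuclideanSpace ℝ (Fin d)), Λ.Countable ∧
    ∃ A B : ℝ, 0 < A ∧ A ≤ B ∧ IsFrameWith μ (fun l : Λ => fexp (l : EuclideanSpace ℝ (Fin d))) A B

/-! ### Auxiliary lemmas -/

section Aux

lemma fexp_norm {d : ℕ} (l x : EuclideanSpace ℝ (Fin d)) : ‖fexp l x‖ = 1 := by
  rw [fexp, Complex.norm_exp_ofReal_mul_I]

lemma fexp_zero_right {d : ℕ} (l : EuclideanSpace ℝ (Fin d)) :
    fexp l (0 : EuclideanSpace ℝ (Fin d)) = 1 := by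
  rw [fexp]
  simp

lemma fexp_continuous {d : ℕ} (l : EuclideanSpace ℝ (Fin d)) : Continuous (fexp l) := by
  apply Complex.continuous_exp.comp
  exact (Complex.continuous_ofReal.comp (continuous_const.mul
    (Continuous.inner continuous_const continuous_id))).mul continuous_const

variable {α : Type*} [MeasurableSpace α] {μ : Measure α}

lemma coef_integrable [IsFiniteMeasure μ] {f : α → ℂ} (hf : MemLp f 2 μ) {g : α → ℂ}
    (hg : AEStronglyMeasurable g μ) (hb : ∀ x, ‖g x‖ ≤ 1) :
    Integrable (fun x => f x * (starRingEnd ℂ) (g x)) μ := by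
  have hf1 : Integrable f μ :=
    memLp_one_iff_integrable.mp (hf.mono_exponent (by norm_num))
  have := hf1.bdd_mul (Continuous.comp_aestronglyMeasurable Complex.continuous_conj hg)
    (c := 1) (Filter.Eventually.of_forall fun x => by simpa using hb x)
  simpa [mul_comm] using this

lemma normsq_integrable {f : α → ℂ} (hf : MemLp f 2 μ) :
    Integrable (fun x => ‖f x‖ ^ 2) μ := by
  have := hf.integrable_norm_rpow (by norm_num) (by norm_num)
  refine this.congr (Filter.Eventually.of_forall fun x => ?_)
  norm_num

lemma normsq_nonneg_int {f : α → ℂ} : 0 ≤ ∫ x, ‖f x‖ ^ 2 ∂μ :=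
  integral_nonneg fun x => by positivity

lemma ae_zero_of_normsq_int_zero {f : α → ℂ} (hf : MemLp f 2 μ)
    (h : ∫ x, ‖f x‖ ^ 2 ∂μ = 0) : f =ᵐ[μ] 0 := by
  have hi := normsq_integrable hf
  have := (integral_eq_zero_iff_of_nonneg (fun x => by positivity) hi).mp h
  filter_upwards [this] with x hx
  simpa using hx

lemma frame_summable {ι : Type*} {e : ι → α → ℂ} {A B : ℝ} (hA : 0 < A)
    (hfr : IsFrameWith μ e A B) {f : α → ℂ} (hf : MemLp f 2 μ) :
    Summable (fun i => ‖∫ x, f x * (starRingEnd ℂ) (e i x) ∂μ‖ ^ 2) := by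
  by_cases h0 : ∫ x, ‖f x‖ ^ 2 ∂μ = 0
  · have hz := ae_zero_of_normsq_int_zero hf h0
    have hc : ∀ i, ∫ x, f x * (starRingEnd ℂ) (e i x) ∂μ = 0 := by
      intro i
      have : (fun x => f x * (starRingEnd ℂ) (e i x)) =ᵐ[μ] (fun _ => (0:ℂ)) := by
        filter_upwards [hz] with x hx
        simp [Pi.zero_apply] at hx
        simp [hx]
      rw [integral_congr_ae this, integral_zero]
    refine summable_zero.congr fun i => ?_
    simp [hc i]
  · by_contra hs
    have hlow := (hfr f hf).1
    rw [tsum_eq_zero_of_not_summable hs] at hlow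
    have hpos : 0 < ∫ x, ‖f x‖ ^ 2 ∂μ :=
      lt_of_le_of_ne normsq_nonneg_int (Ne.symm h0)
    nlinarith

end Aux

section Rho
variable {n m : ℕ} {μ : Measure (EuclideanSpace ℝ (Fin n))} {ν : Measure (EuclideanSpace ℝ (Fin m))}

lemma meas_i1 : Measurable (fun x : EuclideanSpace ℝ (Fin n) => (x, (0 : EuclideanSpace ℝ (Fin m)))) :=
  measurable_id.prodMk measurable_const

lemma meas_i2 : Measurable (fun y : EuclideanSpace ℝ (Fin m) => ((0 : EuclideanSpace ℝ (Fin n)), y)) :=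
  measurable_const.prodMk measurable_id

lemma integral_rho {G : Type*} [NormedAddCommGroup G] [NormedSpace ℝ G]
    (h : (EuclideanSpace ℝ (Fin n) × EuclideanSpace ℝ (Fin m)) → G)
    (hInt : Integrable h (Measure.map (fun x => (x, (0 : EuclideanSpace ℝ (Fin m)))) μ
      + Measure.map (fun y => ((0 : EuclideanSpace ℝ (Fin n)), y)) ν)) :
    ∫ p, h p ∂(Measure.map (fun x => (x, (0 : EuclideanSpace ℝ (Fin m)))) μ
      + Measure.map (fun y => ((0 : EuclideanSpace ℝ (Fin n)), y)) ν)
      = (∫ x, h (x, 0) ∂μ) + ∫ y, h (0, y) ∂ν := by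
  have h1 : Integrable h (Measure.map (fun x => (x, (0 : EuclideanSpace ℝ (Fin m)))) μ) :=
    hInt.mono_measure (Measure.le_add_right le_rfl)
  have h2 : Integrable h (Measure.map (fun y => ((0 : EuclideanSpace ℝ (Fin n)), y)) ν) :=
    hInt.mono_measure (Measure.le_add_left le_rfl)
  rw [integral_add_measure h1 h2,
    integral_map meas_i1.aemeasurable h1.aestronglyMeasurable,
    integral_map meas_i2.aemeasurable h2.aestronglyMeasurable]

variable [IsFiniteMeasure μ] [IsFiniteMeasure ν]

lemma rho_finite : IsFiniteMeasure (Measure.map (fun x => (x, (0 : EuclideanSpace ℝ (Fin m)))) μ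
    + Measure.map (fun y => ((0 : EuclideanSpace ℝ (Fin n)), y)) ν) := by
  haveI := μ.isFiniteMeasure_map (fun x => (x, (0 : EuclideanSpace ℝ (Fin m))))
  haveI := ν.isFiniteMeasure_map (fun y => ((0 : EuclideanSpace ℝ (Fin n)), y))
  infer_instance

omit [IsFiniteMeasure μ] [IsFiniteMeasure ν] in
lemma memLp_comp1 {f : EuclideanSpace ℝ (Fin n) × EuclideanSpace ℝ (Fin m) → ℂ}
    (hf : MemLp f 2 (Measure.map (fun x => (x, (0 : EuclideanSpace ℝ (Fin m)))) μ
      + Measure.map (fun y => ((0 : EuclideanSpace ℝ (Fin n)), y)) ν)) :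
    MemLp (fun x => f (x, 0)) 2 μ := by
  have h1 : MemLp f 2 (Measure.map (fun x => (x, (0 : EuclideanSpace ℝ (Fin m)))) μ) :=
    hf.mono_measure (Measure.le_add_right le_rfl)
  exact (memLp_map_measure_iff h1.aestronglyMeasurable meas_i1.aemeasurable).mp h1

omit [IsFiniteMeasure μ] [IsFiniteMeasure ν] in
lemma memLp_comp2 {f : EuclideanSpace ℝ (Fin n) × EuclideanSpace ℝ (Fin m) → ℂ}
    (hf : MemLp f 2 (Measure.map (fun x => (x, (0 : EuclideanSpace ℝ (Fin m)))) μ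
      + Measure.map (fun y => ((0 : EuclideanSpace ℝ (Fin n)), y)) ν)) :
    MemLp (fun y => f (0, y)) 2 ν := by
  have h2 : MemLp f 2 (Measure.map (fun y => ((0 : EuclideanSpace ℝ (Fin n)), y)) ν) :=
    hf.mono_measure (Measure.le_add_left le_rfl)
  exact (memLp_map_measure_iff h2.aestronglyMeasurable meas_i2.aemeasurable).mp h2

omit [IsFiniteMeasure μ] [IsFiniteMeasure ν] in
lemma norm_split {f : EuclideanSpace ℝ (Fin n) × EuclideanSpace ℝ (Fin m) → ℂ}
    (hf : MemLp f 2 (Measure.map (fun x => (x, (0 : EuclideanSpace ℝ (Fin m)))) μ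
      + Measure.map (fun y => ((0 : EuclideanSpace ℝ (Fin n)), y)) ν)) :
    ∫ p, ‖f p‖ ^ 2 ∂(Measure.map (fun x => (x, (0 : EuclideanSpace ℝ (Fin m)))) μ
      + Measure.map (fun y => ((0 : EuclideanSpace ℝ (Fin n)), y)) ν)
    = (∫ x, ‖f (x, 0)‖ ^ 2 ∂μ) + ∫ y, ‖f (0, y)‖ ^ 2 ∂ν :=
  integral_rho (fun p => ‖f p‖ ^ 2) (normsq_integrable hf)

lemma coef_split {f : EuclideanSpace ℝ (Fin n) × EuclideanSpace ℝ (Fin m) → ℂ}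
    (hf : MemLp f 2 (Measure.map (fun x => (x, (0 : EuclideanSpace ℝ (Fin m)))) μ
      + Measure.map (fun y => ((0 : EuclideanSpace ℝ (Fin n)), y)) ν))
    (a : EuclideanSpace ℝ (Fin n)) (b : EuclideanSpace ℝ (Fin m)) :
    ∫ p, f p * (starRingEnd ℂ) (fexp a p.1 * fexp b p.2)
      ∂(Measure.map (fun x => (x, (0 : EuclideanSpace ℝ (Fin m)))) μ
        + Measure.map (fun y => ((0 : EuclideanSpace ℝ (Fin n)), y)) ν)
    = (∫ x, f (x, 0) * (starRingEnd ℂ) (fexp a x) ∂μ)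
      + ∫ y, f (0, y) * (starRingEnd ℂ) (fexp b y) ∂ν := by
  haveI := rho_finite (μ := μ) (ν := ν)
  have hInt : Integrable (fun p => f p * (starRingEnd ℂ) (fexp a p.1 * fexp b p.2))
      (Measure.map (fun x => (x, (0 : EuclideanSpace ℝ (Fin m)))) μ
        + Measure.map (fun y => ((0 : EuclideanSpace ℝ (Fin n)), y)) ν) := by
    refine coef_integrable hf ?_ ?_
    · exact (((fexp_continuous a).comp continuous_fst).mul
        ((fexp_continuous b).comp continuous_snd)).aestronglyMeasurable
    · intro p
      rw [norm_mul, fexp_norm, fexp_norm, mul_one]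
  have := integral_rho (fun p => f p * (starRingEnd ℂ) (fexp a p.1 * fexp b p.2)) hInt
  simpa [fexp_zero_right, mul_one] using this

end Rho

section Split
variable {α : Type*} [MetricSpace α] [MeasurableSpace α] [OpensMeasurableSpace α]
  [TopologicalSpace.SeparableSpace α] {μ : Measure α} [NullSingletonClass μ]

lemma split_pos (s : Set α) (hs : MeasurableSet s) (hpos : 0 < μ s) :
    ∃ t, MeasurableSet t ∧ t ⊆ s ∧ 0 < μ t ∧ 0 < μ (s \ t) := by
  by_contra hcon
  push_neg at hcon
  have hdich : ∀ t : Set α, MeasurableSet t → 0 < μ (s ∩ t) → μ (s \ t) = 0 := by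
    intro t ht hst
    have h := hcon (s ∩ t) (hs.inter ht) Set.inter_subset_left hst
    have : s \ (s ∩ t) = s \ t := Set.diff_self_inter
    rw [this] at h
    exact le_antisymm h zero_le
  have hne : s.Nonempty := nonempty_of_measure_ne_zero hpos.ne'
  have : Nonempty α := ⟨hne.choose⟩
  set u : ℕ → α := TopologicalSpace.denseSeq α with hu
  have hdense : DenseRange u := TopologicalSpace.denseRange_denseSeq α
  have hcover : ∀ k : ℕ, ∃ i : ℕ, 0 < μ (s ∩ Metric.ball (u i) (1 / (k + 1))) := by
    intro k
    by_contra hno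
    push_neg at hno
    have hsub : s ⊆ ⋃ i, s ∩ Metric.ball (u i) (1 / (k + 1)) := by
      intro x hx
      have hpos' : (0:ℝ) < 1 / (k + 1) := by positivity
      obtain ⟨i, hi⟩ := hdense.exists_dist_lt x hpos'
      exact Set.mem_iUnion.2 ⟨i, hx, by simpa [dist_comm] using hi⟩
    have : μ s = 0 := by
      refine measure_mono_null hsub (measure_iUnion_null fun i => ?_)
      exact le_antisymm (hno i) zero_le
    exact hpos.ne' this
  choose i hi using hcover
  set t : Set α := s ∩ ⋂ k, Metric.ball (u (i k)) (1 / (k + 1)) with ht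
  have hdiffnull : μ (s \ ⋂ k, Metric.ball (u (i k)) (1 / (k + 1))) = 0 := by
    rw [Set.diff_iInter]
    refine measure_iUnion_null fun k => ?_
    exact hdich _ measurableSet_ball (hi k)
  have htpos : 0 < μ t := by
    have : μ s ≤ μ t + μ (s \ ⋂ k, Metric.ball (u (i k)) (1 / (k + 1))) := by
      refine (measure_mono ?_).trans (measure_union_le _ _)
      intro x hx
      by_cases hxm : x ∈ ⋂ k, Metric.ball (u (i k)) (1 / (k + 1))
      · exact Or.inl ⟨hx, hxm⟩
      · exact Or.inr ⟨hx, hxm⟩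
    rw [hdiffnull, add_zero] at this
    exact lt_of_lt_of_le hpos this
  have hsub : t.Subsingleton := by
    intro x hx y hy
    by_contra hxy
    have hd : 0 < dist x y := dist_pos.2 hxy
    obtain ⟨k, hk⟩ := exists_nat_gt (2 / dist x y)
    have hxk : x ∈ Metric.ball (u (i k)) (1 / (k + 1)) := (Set.mem_iInter.1 hx.2) k
    have hyk : y ∈ Metric.ball (u (i k)) (1 / (k + 1)) := (Set.mem_iInter.1 hy.2) k
    rw [Metric.mem_ball] at hxk hyk
    have hd2 : dist x y < 1 / (k + 1) + 1 / (k + 1) :=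
      lt_of_le_of_lt (dist_triangle_right x y (u (i k))) (add_lt_add hxk hyk)
    have hk1 : (0:ℝ) < (k:ℝ) + 1 := by positivity
    have hd3 : dist x y < 2 / ((k:ℝ) + 1) := by
      rw [← add_div] at hd2
      convert hd2 using 2
      norm_num
    have h3 : dist x y * ((k:ℝ) + 1) < 2 := (lt_div_iff₀ hk1).mp hd3
    rw [div_lt_iff₀ hd] at hk
    nlinarith [hd]
  exact htpos.ne' (hsub.measure_zero μ)

lemma disjoint_pos_family (N : ℕ) :
    ∀ (s : Set α), MeasurableSet s → 0 < μ s →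
    ∃ S : Fin N → Set α, (∀ j, MeasurableSet (S j)) ∧ (∀ j, S j ⊆ s) ∧
      (∀ j, 0 < μ (S j)) ∧ Pairwise (Function.onFun Disjoint S) := by
  induction N with
  | zero =>
    intro s _ _
    exact ⟨Fin.elim0, fun j => j.elim0, fun j => j.elim0, fun j => j.elim0, fun j => j.elim0⟩
  | succ N ih =>
    intro s hs hpos
    obtain ⟨t, ht, hts, htpos, hstpos⟩ := split_pos s hs hpos
    obtain ⟨S, hSm, hSsub, hSpos, hSdisj⟩ := ih (s \ t) (hs.diff ht) hstpos
    refine ⟨Fin.cons t S, ?_, ?_, ?_, ?_⟩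
    · intro j
      refine Fin.cases ?_ ?_ j <;> simp [ht, hSm]
    · intro j
      refine Fin.cases ?_ ?_ j
      · simpa using hts
      · intro k
        simpa using (hSsub k).trans Set.diff_subset
    · intro j
      refine Fin.cases ?_ ?_ j <;> simp [htpos, hSpos]
    · intro j k hjk
      rcases Fin.eq_zero_or_eq_succ j with rfl | ⟨j', rfl⟩ <;>
        rcases Fin.eq_zero_or_eq_succ k with rfl | ⟨k', rfl⟩
      · exact absurd rfl hjk
      · simp only [Function.onFun, Fin.cons_zero, Fin.cons_succ]
        exact Set.disjoint_of_subset_right (hSsub k') disjoint_sdiff_self_right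
      · simp only [Function.onFun, Fin.cons_zero, Fin.cons_succ]
        exact (Set.disjoint_of_subset_right (hSsub j') disjoint_sdiff_self_right).symm
      · simp only [Function.onFun, Fin.cons_succ]
        exact hSdisj (fun h => hjk (by rw [h]))

end Split

section Infinite
variable {d : ℕ} {ν : Measure (EuclideanSpace ℝ (Fin d))} [IsFiniteMeasure ν] [NullSingletonClass ν]

lemma const_conj_fexp_integrable (c : ℂ) (v : EuclideanSpace ℝ (Fin d)) :
    Integrable (fun x => c * (starRingEnd ℂ) (fexp v x)) ν := by
  have := (integrable_const (μ := ν) c).bdd_mul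
    (Continuous.comp_aestronglyMeasurable Complex.continuous_conj
      (fexp_continuous v).aestronglyMeasurable)
    (c := 1) (Filter.Eventually.of_forall fun x => by simpa using (fexp_norm v x).le)
  simpa [mul_comm] using this

lemma frame_set_infinite (hν : ν ≠ 0) {V : Set (EuclideanSpace ℝ (Fin d))} {A B : ℝ}
    (hA : 0 < A)
    (hfr : IsFrameWith ν (fun l : V => fexp (l : EuclideanSpace ℝ (Fin d))) A B) :
    V.Infinite := by
  by_contra hfin
  rw [Set.not_infinite] at hfin
  haveI : Fintype ↥V := hfin.fintype
  set r := Fintype.card ↥V with hr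
  have huniv : 0 < ν Set.univ := Measure.measure_univ_pos.mpr hν
  obtain ⟨S, hSm, -, hSpos, hSdisj⟩ :=
    disjoint_pos_family (μ := ν) (r + 1) Set.univ MeasurableSet.univ huniv
  set M : Matrix ↥V (Fin (r + 1)) ℂ :=
    fun v i => ∫ x in S i, (starRingEnd ℂ) (fexp (v : EuclideanSpace ℝ (Fin d)) x) ∂ν with hM
  have hninj : ¬ Function.Injective M.mulVecLin := by
    intro hinj
    have := LinearMap.finrank_le_finrank_of_injective hinj
    rw [Module.finrank_fintype_fun_eq_card, Module.finrank_fintype_fun_eq_card,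
      Fintype.card_fin] at this
    omega
  obtain ⟨x, y, hxy, hne⟩ := Function.not_injective_iff.mp hninj
  set c : Fin (r + 1) → ℂ := x - y with hc
  have hc0 : c ≠ 0 := sub_ne_zero.mpr hne
  have hTc : M.mulVec c = 0 := by
    have : M.mulVecLin (x - y) = 0 := by rw [map_sub, hxy, sub_self]
    simpa [Matrix.mulVecLin_apply] using this
  set g : EuclideanSpace ℝ (Fin d) → ℂ :=
    fun z => ∑ i : Fin (r + 1), Set.indicator (S i) (fun _ => c i) z with hg
  have hgmeas : Measurable g := by
    apply Finset.measurable_sum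
    intro i _
    exact Measurable.indicator measurable_const (hSm i)
  have hgmem : MemLp g 2 ν := by
    refine MemLp.of_bound hgmeas.aestronglyMeasurable (∑ i : Fin (r + 1), ‖c i‖)
      (Filter.Eventually.of_forall fun z => ?_)
    refine (norm_sum_le _ _).trans (Finset.sum_le_sum fun i _ => ?_)
    by_cases h : z ∈ S i <;> simp [Set.indicator_apply, h]
  have hcoef : ∀ v : ↥V,
      ∫ z, g z * (starRingEnd ℂ) (fexp (v : EuclideanSpace ℝ (Fin d)) z) ∂ν = 0 := by
    intro v
    have heq : (fun z => g z * (starRingEnd ℂ) (fexp (v : EuclideanSpace ℝ (Fin d)) z))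
        = fun z => ∑ i : Fin (r + 1),
            Set.indicator (S i)
              (fun w => c i * (starRingEnd ℂ) (fexp (v : EuclideanSpace ℝ (Fin d)) w)) z := by
      funext z
      rw [hg, Finset.sum_mul]
      refine Finset.sum_congr rfl fun i _ => ?_
      by_cases h : z ∈ S i <;> simp [Set.indicator_apply, h]
    rw [heq, integral_finset_sum]
    · have : ∀ i : Fin (r + 1), ∫ z, Set.indicator (S i)
          (fun w => c i * (starRingEnd ℂ) (fexp (v : EuclideanSpace ℝ (Fin d)) w)) z ∂ν
          = c i * M v i := by
        intro i
        rw [integral_indicator (hSm i), integral_const_mul]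
      simp only [this]
      have := congrFun hTc v
      simpa [Matrix.mulVec, dotProduct, mul_comm] using this
    · intro i _
      exact (const_conj_fexp_integrable (c i) _).indicator (hSm i)
  have hgpos : 0 < ∫ z, ‖g z‖ ^ 2 ∂ν := by
    refine lt_of_le_of_ne normsq_nonneg_int (fun h0 => ?_)
    have hzero := ae_zero_of_normsq_int_zero hgmem h0.symm
    obtain ⟨i0, hi0⟩ := Function.ne_iff.mp hc0
    have hgi0 : ∀ z ∈ S i0, g z = c i0 := by
      intro z hz
      show ∑ i : Fin (r + 1), (S i).indicator (fun _ => c i) z = c i0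
      rw [Finset.sum_eq_single i0]
      · simp [Set.indicator_apply, hz]
      · intro i _ hii
        have hdisj := hSdisj hii
        have : z ∉ S i := fun hzi => (Set.disjoint_left.mp hdisj hzi) hz
        simp [Set.indicator_apply, this]
      · intro h
        exact absurd (Finset.mem_univ i0) h
    have : ν (S i0) = 0 := by
      have hnull : ν {a | g a ≠ 0} = 0 := by
        have := ae_iff.mp hzero
        simpa using this
      refine measure_mono_null (fun z hz => ?_) hnull
      simp only [Set.mem_setOf_eq]
      rw [hgi0 z hz]
      simpa using hi0
    exact (hSpos i0).ne' this
  have hlow := (hfr g hgmem).1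
  have : (∑' v : ↥V, ‖∫ z, g z * (starRingEnd ℂ)
      (fexp (v : EuclideanSpace ℝ (Fin d)) z) ∂ν‖ ^ 2) = 0 := by
    rw [tsum_congr (fun v => by rw [hcoef v]; simp : ∀ v : ↥V, ‖∫ z, g z * (starRingEnd ℂ)
      (fexp (v : EuclideanSpace ℝ (Fin d)) z) ∂ν‖ ^ 2 = 0)]
    exact tsum_zero
  rw [this] at hlow
  nlinarith

end Infinite

section TsumAux

lemma normsq_add_upper (a b : ℂ) : ‖a + b‖ ^ 2 ≤ 2 * ‖a‖ ^ 2 + 2 * ‖b‖ ^ 2 := by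
  have h := norm_add_le a b
  nlinarith [norm_nonneg (a + b), norm_nonneg a, norm_nonneg b, sq_nonneg (‖a‖ - ‖b‖)]

lemma normsq_add_lower (a b : ℂ) : 1 / 2 * ‖a‖ ^ 2 - ‖b‖ ^ 2 ≤ ‖a + b‖ ^ 2 := by
  have h2 : ‖a‖ ≤ ‖a + b‖ + ‖b‖ := by
    have := norm_add_le (a + b) (-b)
    simpa using this
  nlinarith [norm_nonneg (a + b), norm_nonneg a, norm_nonneg b, sq_nonneg (‖a + b‖ - ‖b‖)]

variable {β : Type*} {f : β → ℝ}

lemma tsum_range_eq {ι : Type*} (f : β → ℝ) (Φ : ι → β) (hΦ : Function.Injective Φ) :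
    (Summable (fun i => f (Φ i)) → Summable (fun x : ↥(Set.range Φ) => f ↑x)) ∧
    (∑' x : ↥(Set.range Φ), f ↑x) = ∑' i, f (Φ i) := by
  have he : ∀ c : ι, f ((Equiv.ofInjective Φ hΦ c : ↥(Set.range Φ)) : β) = f (Φ c) := by
    intro c; rfl
  constructor
  · intro hs
    rw [← (Equiv.ofInjective Φ hΦ).summable_iff]
    exact hs.congr fun c => (he c).symm
  · rw [← (Equiv.ofInjective Φ hΦ).tsum_eq (fun x : ↥(Set.range Φ) => f ↑x)]
    exact tsum_congr he

lemma tsum_union_est (hnn : ∀ b, 0 ≤ f b) {s t : Set β}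
    (hs : Summable (fun x : ↥s => f ↑x)) (ht : Summable (fun x : ↥t => f ↑x)) :
    Summable (fun x : ↥(s ∪ t) => f ↑x) ∧
    (∑' x : ↥s, f ↑x) ≤ (∑' x : ↥(s ∪ t), f ↑x) ∧
    (∑' x : ↥(s ∪ t), f ↑x) ≤ (∑' x : ↥s, f ↑x) + (∑' x : ↥t, f ↑x) := by
  have hdiffsub : Summable (fun x : ↥(t \ s) => f ↑x) :=
    ht.comp_injective (Set.inclusion_injective Set.diff_subset)
  have hd : Disjoint s (t \ s) := disjoint_sdiff_self_right
  have hkey : (∑' x : ↥(s ∪ (t \ s)), f ↑x)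
      = (∑' x : ↥s, f ↑x) + ∑' x : ↥(t \ s), f ↑x :=
    Summable.tsum_union_disjoint hd hs hdiffsub
  have hSum : Summable (fun x : ↥(s ∪ (t \ s)) => f ↑x) :=
    ⟨_, hs.hasSum.add_disjoint hd hdiffsub.hasSum⟩
  rw [Set.union_diff_self] at hkey hSum
  have hd1 : 0 ≤ ∑' x : ↥(t \ s), f ↑x := tsum_nonneg fun x => hnn _
  have hd2 : (∑' x : ↥(t \ s), f ↑x) ≤ ∑' x : ↥t, f ↑x :=
    Summable.tsum_le_tsum_of_inj (Set.inclusion Set.diff_subset)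
      (Set.inclusion_injective Set.diff_subset) (fun c _ => hnn _) (fun b => le_rfl)
      hdiffsub ht
  exact ⟨hSum, by rw [hkey]; linarith, by rw [hkey]; linarith⟩

lemma summable_snd {k : ℕ} {γ : Type*} {h : γ → ℝ} (hnn : ∀ c, 0 ≤ h c) (hs : Summable h) :
    Summable (fun p : Fin k × γ => h p.2) := by
  refine (summable_prod_of_nonneg fun p => hnn p.2).mpr ⟨fun i => hs, ?_⟩
  exact Summable.of_finite

lemma tsum_snd_const {k : ℕ} {γ : Type*} (h : γ → ℝ)
    (hsum : Summable (fun p : Fin k × γ => h p.2)) :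
    (∑' p : Fin k × γ, h p.2) = k * ∑' c, h c := by
  rw [Summable.tsum_prod' hsum (fun b => hsum.comp_injective
    (fun c1 c2 e => (Prod.ext_iff.mp e).2 : Function.Injective (fun c : γ => (b, c)))),
    tsum_fintype]
  simp [Finset.sum_const, Finset.card_univ, nsmul_eq_mul]

end TsumAux

set_option maxHeartbeats 2000000 in
/-- Theorem 2.1: if continuous measures `μ` on ℝⁿ and `ν` on ℝᵐ each admit a Fourier
frame, then `ρ = μ × δ₀ + δ₀ × ν` admits a Fourier frame on ℝⁿ × ℝᵐ. -/
theorem mixed_type_measure_hasFourierFrame {n m : ℕ}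
    (μ : Measure (EuclideanSpace ℝ (Fin n))) (ν : Measure (EuclideanSpace ℝ (Fin m)))
    [IsFiniteMeasure μ] [IsFiniteMeasure ν] [NullSingletonClass μ] [NullSingletonClass ν]
    (hμ : HasFourierFrame μ) (hν : HasFourierFrame ν) :
    ∃ Λ : Set (EuclideanSpace ℝ (Fin n) × EuclideanSpace ℝ (Fin m)), Λ.Countable ∧
      ∃ A B : ℝ, 0 < A ∧ A ≤ B ∧
        IsFrameWith
          (Measure.map (fun x => (x, (0 : EuclideanSpace ℝ (Fin m)))) μ
            + Measure.map (fun y => ((0 : EuclideanSpace ℝ (Fin n)), y)) ν)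
          (fun l : Λ => fun p => fexp (l : EuclideanSpace ℝ (Fin n) × EuclideanSpace ℝ (Fin m)).1 p.1 *
            fexp (l : EuclideanSpace ℝ (Fin n) × EuclideanSpace ℝ (Fin m)).2 p.2) A B := by
  classical
  obtain ⟨U, hUc, A₁, B₁, hA₁, hAB₁, hfrU⟩ := hμ
  obtain ⟨V, hVc, A₂, B₂, hA₂, hAB₂, hfrV⟩ := hν
  have hB₁ : (0:ℝ) < B₁ := lt_of_lt_of_le hA₁ hAB₁
  have hB₂ : (0:ℝ) < B₂ := lt_of_lt_of_le hA₂ hAB₂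
  by_cases hμ0 : μ = 0
  · by_cases hν0 : ν = 0
    · -- both measures vanish
      subst hμ0; subst hν0
      refine ⟨∅, Set.countable_empty, 1, 1, one_pos, le_rfl, ?_⟩
      intro f hf
      simp only [Measure.map_zero, add_zero, integral_zero_measure]
      constructor
      · rw [tsum_empty]; simp
      · rw [tsum_empty]; simp
    · -- μ = 0, ν ≠ 0
      subst hμ0
      set Φ : ↥V → EuclideanSpace ℝ (Fin n) × EuclideanSpace ℝ (Fin m) :=
        fun v => ((0 : EuclideanSpace ℝ (Fin n)), (v : EuclideanSpace ℝ (Fin m))) with hΦdef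
      have hΦinj : Function.Injective Φ := fun a b h =>
        Subtype.coe_injective (Prod.ext_iff.mp h).2
      haveI := hVc.to_subtype
      refine ⟨Set.range Φ, Set.countable_range _, A₂, B₂, hA₂, hAB₂, ?_⟩
      intro f hf
      have hf₂ : MemLp (fun y => f (0, y)) 2 ν := memLp_comp2 hf
      have hD : ∀ l : EuclideanSpace ℝ (Fin n) × EuclideanSpace ℝ (Fin m),
          ∫ p, f p * (starRingEnd ℂ) (fexp l.1 p.1 * fexp l.2 p.2)
            ∂(Measure.map (fun x => (x, (0 : EuclideanSpace ℝ (Fin m)))) (0 : Measure _)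
              + Measure.map (fun y => ((0 : EuclideanSpace ℝ (Fin n)), y)) ν)
          = ∫ y, f (0, y) * (starRingEnd ℂ) (fexp l.2 y) ∂ν := by
        intro l
        rw [coef_split hf l.1 l.2]
        simp
      have hmain := hfrV (fun y => f (0, y)) hf₂
      have htsum : (∑' (i : ↥(Set.range Φ)),
          ‖∫ p, f p * (starRingEnd ℂ) (fexp ((i : EuclideanSpace ℝ (Fin n) × EuclideanSpace ℝ (Fin m))).1 p.1 *
              fexp ((i : EuclideanSpace ℝ (Fin n) × EuclideanSpace ℝ (Fin m))).2 p.2)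
            ∂(Measure.map (fun x => (x, (0 : EuclideanSpace ℝ (Fin m)))) (0 : Measure _)
              + Measure.map (fun y => ((0 : EuclideanSpace ℝ (Fin n)), y)) ν)‖ ^ 2)
          = ∑' v : ↥V, ‖∫ y, f (0, y) * (starRingEnd ℂ)
              (fexp (v : EuclideanSpace ℝ (Fin m)) y) ∂ν‖ ^ 2 := by
        calc (∑' (i : ↥(Set.range Φ)), ‖∫ p, f p * (starRingEnd ℂ)
              (fexp ((i : EuclideanSpace ℝ (Fin n) × EuclideanSpace ℝ (Fin m))).1 p.1 *
               fexp ((i : EuclideanSpace ℝ (Fin n) × EuclideanSpace ℝ (Fin m))).2 p.2)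
              ∂(Measure.map (fun x => (x, (0 : EuclideanSpace ℝ (Fin m)))) (0 : Measure _)
                + Measure.map (fun y => ((0 : EuclideanSpace ℝ (Fin n)), y)) ν)‖ ^ 2)
            = ∑' (i : ↥(Set.range Φ)), (fun l : EuclideanSpace ℝ (Fin n) × EuclideanSpace ℝ (Fin m) =>
                ‖∫ y, f (0, y) * (starRingEnd ℂ) (fexp l.2 y) ∂ν‖ ^ 2) ↑i :=
              tsum_congr (fun i => by rw [hD])
          _ = ∑' v : ↥V, ‖∫ y, f (0, y) * (starRingEnd ℂ)
                (fexp (v : EuclideanSpace ℝ (Fin m)) y) ∂ν‖ ^ 2 :=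
              (tsum_range_eq (fun l : EuclideanSpace ℝ (Fin n) × EuclideanSpace ℝ (Fin m) =>
                ‖∫ y, f (0, y) * (starRingEnd ℂ) (fexp l.2 y) ∂ν‖ ^ 2) Φ hΦinj).2
      rw [norm_split hf]
      simp only [integral_zero_measure, zero_add]
      rw [htsum]
      exact hmain
  · by_cases hν0 : ν = 0
    · -- μ ≠ 0, ν = 0
      subst hν0
      set Φ : ↥U → EuclideanSpace ℝ (Fin n) × EuclideanSpace ℝ (Fin m) :=
        fun u => ((u : EuclideanSpace ℝ (Fin n)), (0 : EuclideanSpace ℝ (Fin m))) with hΦdef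
      have hΦinj : Function.Injective Φ := fun a b h =>
        Subtype.coe_injective (Prod.ext_iff.mp h).1
      haveI := hUc.to_subtype
      refine ⟨Set.range Φ, Set.countable_range _, A₁, B₁, hA₁, hAB₁, ?_⟩
      intro f hf
      have hf₁ : MemLp (fun x => f (x, 0)) 2 μ := memLp_comp1 hf
      have hD : ∀ l : EuclideanSpace ℝ (Fin n) × EuclideanSpace ℝ (Fin m),
          ∫ p, f p * (starRingEnd ℂ) (fexp l.1 p.1 * fexp l.2 p.2)
            ∂(Measure.map (fun x => (x, (0 : EuclideanSpace ℝ (Fin m)))) μ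
              + Measure.map (fun y => ((0 : EuclideanSpace ℝ (Fin n)), y)) (0 : Measure _))
          = ∫ x, f (x, 0) * (starRingEnd ℂ) (fexp l.1 x) ∂μ := by
        intro l
        rw [coef_split hf l.1 l.2]
        simp
      have hmain := hfrU (fun x => f (x, 0)) hf₁
      have htsum : (∑' (i : ↥(Set.range Φ)),
          ‖∫ p, f p * (starRingEnd ℂ) (fexp ((i : EuclideanSpace ℝ (Fin n) × EuclideanSpace ℝ (Fin m))).1 p.1 *
              fexp ((i : EuclideanSpace ℝ (Fin n) × EuclideanSpace ℝ (Fin m))).2 p.2)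
            ∂(Measure.map (fun x => (x, (0 : EuclideanSpace ℝ (Fin m)))) μ
              + Measure.map (fun y => ((0 : EuclideanSpace ℝ (Fin n)), y)) (0 : Measure _))‖ ^ 2)
          = ∑' u : ↥U, ‖∫ x, f (x, 0) * (starRingEnd ℂ)
              (fexp (u : EuclideanSpace ℝ (Fin n)) x) ∂μ‖ ^ 2 := by
        calc (∑' (i : ↥(Set.range Φ)), ‖∫ p, f p * (starRingEnd ℂ)
              (fexp ((i : EuclideanSpace ℝ (Fin n) × EuclideanSpace ℝ (Fin m))).1 p.1 *
               fexp ((i : EuclideanSpace ℝ (Fin n) × EuclideanSpace ℝ (Fin m))).2 p.2)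
              ∂(Measure.map (fun x => (x, (0 : EuclideanSpace ℝ (Fin m)))) μ
                + Measure.map (fun y => ((0 : EuclideanSpace ℝ (Fin n)), y)) (0 : Measure _))‖ ^ 2)
            = ∑' (i : ↥(Set.range Φ)), (fun l : EuclideanSpace ℝ (Fin n) × EuclideanSpace ℝ (Fin m) =>
                ‖∫ x, f (x, 0) * (starRingEnd ℂ) (fexp l.1 x) ∂μ‖ ^ 2) ↑i :=
              tsum_congr (fun i => by rw [hD])
          _ = ∑' u : ↥U, ‖∫ x, f (x, 0) * (starRingEnd ℂ)
                (fexp (u : EuclideanSpace ℝ (Fin n)) x) ∂μ‖ ^ 2 :=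
              (tsum_range_eq (fun l : EuclideanSpace ℝ (Fin n) × EuclideanSpace ℝ (Fin m) =>
                ‖∫ x, f (x, 0) * (starRingEnd ℂ) (fexp l.1 x) ∂μ‖ ^ 2) Φ hΦinj).2
      rw [norm_split hf]
      simp only [integral_zero_measure, add_zero]
      rw [htsum]
      exact hmain
    · -- main case : μ ≠ 0 and ν ≠ 0
      have hUinf : U.Infinite := frame_set_infinite hμ0 hA₁ hfrU
      have hVinf : V.Infinite := frame_set_infinite hν0 hA₂ hfrV
      haveI := hUc.to_subtype
      haveI := hVc.to_subtype
      haveI : Infinite ↥U := hUinf.to_subtype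
      haveI : Infinite ↥V := hVinf.to_subtype
      obtain ⟨k, hk⟩ := exists_nat_ge ((2 * B₁ + 2) / A₁)
      obtain ⟨k', hk'⟩ := exists_nat_ge ((2 * B₂ + 2) / A₂)
      have hkA : 2 * B₁ + 2 ≤ (k:ℝ) * A₁ := by
        rw [div_le_iff₀ hA₁] at hk; linarith
      have hk'A : 2 * B₂ + 2 ≤ (k':ℝ) * A₂ := by
        rw [div_le_iff₀ hA₂] at hk'; linarith
      obtain ⟨eU, heU⟩ := Countable.exists_injective_nat (Fin k × ↥U)
      obtain ⟨eV, heV⟩ := Countable.exists_injective_nat (Fin k' × ↥V)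
      set ψ : Fin k × ↥U → ↥V := fun p => Infinite.natEmbedding ↥V (eU p) with hψdef
      set ψ' : Fin k' × ↥V → ↥U := fun q => Infinite.natEmbedding ↥U (eV q) with hψ'def
      have hψinj : Function.Injective ψ := fun p q h =>
        heU ((Infinite.natEmbedding ↥V).injective h)
      have hψ'inj : Function.Injective ψ' := fun p q h =>
        heV ((Infinite.natEmbedding ↥U).injective h)
      set Φ₁ : Fin k × ↥U → EuclideanSpace ℝ (Fin n) × EuclideanSpace ℝ (Fin m) :=
        fun p => ((p.2 : EuclideanSpace ℝ (Fin n)), (ψ p : EuclideanSpace ℝ (Fin m))) with hΦ₁def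
      set Φ₂ : Fin k' × ↥V → EuclideanSpace ℝ (Fin n) × EuclideanSpace ℝ (Fin m) :=
        fun q => ((ψ' q : EuclideanSpace ℝ (Fin n)), (q.2 : EuclideanSpace ℝ (Fin m))) with hΦ₂def
      have hΦ₁inj : Function.Injective Φ₁ := fun p q h =>
        hψinj (Subtype.coe_injective (Prod.ext_iff.mp h).2)
      have hΦ₂inj : Function.Injective Φ₂ := fun p q h =>
        hψ'inj (Subtype.coe_injective (Prod.ext_iff.mp h).1)
      have hkc : (0:ℝ) ≤ (k:ℝ) := Nat.cast_nonneg k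
      have hk'c : (0:ℝ) ≤ (k':ℝ) := Nat.cast_nonneg k'
      refine ⟨Set.range Φ₁ ∪ Set.range Φ₂,
        (Set.countable_range _).union (Set.countable_range _),
        1 / 2, 2 * (k:ℝ) * B₁ + 2 * B₁ + 2 * (k':ℝ) * B₂ + 2 * B₂ + 1, by norm_num, ?_, ?_⟩
      · nlinarith [mul_nonneg hkc hB₁.le, mul_nonneg hk'c hB₂.le]
      intro f hf
      have hf₁ : MemLp (fun x => f (x, 0)) 2 μ := memLp_comp1 hf
      have hf₂ : MemLp (fun y => f (0, y)) 2 ν := memLp_comp2 hf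
      set CF : EuclideanSpace ℝ (Fin n) → ℂ :=
        fun t => ∫ x, f (x, 0) * (starRingEnd ℂ) (fexp t x) ∂μ with hCFdef
      set CG : EuclideanSpace ℝ (Fin m) → ℂ :=
        fun t => ∫ y, f (0, y) * (starRingEnd ℂ) (fexp t y) ∂ν with hCGdef
      set N₁ : ℝ := ∫ x, ‖f (x, 0)‖ ^ 2 ∂μ with hN₁def
      set N₂ : ℝ := ∫ y, ‖f (0, y)‖ ^ 2 ∂ν with hN₂def
      have hN₁nn : 0 ≤ N₁ := normsq_nonneg_int
      have hN₂nn : 0 ≤ N₂ := normsq_nonneg_int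
      set SU : ℝ := ∑' u : ↥U, ‖CF (u : EuclideanSpace ℝ (Fin n))‖ ^ 2 with hSUdef
      set SV : ℝ := ∑' v : ↥V, ‖CG (v : EuclideanSpace ℝ (Fin m))‖ ^ 2 with hSVdef
      have hSUnn : 0 ≤ SU := tsum_nonneg fun u => by positivity
      have hSVnn : 0 ≤ SV := tsum_nonneg fun v => by positivity
      have hUlow : A₁ * N₁ ≤ SU := (hfrU (fun x => f (x, 0)) hf₁).1
      have hUup : SU ≤ B₁ * N₁ := (hfrU (fun x => f (x, 0)) hf₁).2
      have hVlow : A₂ * N₂ ≤ SV := (hfrV (fun y => f (0, y)) hf₂).1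
      have hVup : SV ≤ B₂ * N₂ := (hfrV (fun y => f (0, y)) hf₂).2
      have hSF : Summable (fun u : ↥U => ‖CF (u : EuclideanSpace ℝ (Fin n))‖ ^ 2) :=
        frame_summable hA₁ hfrU hf₁
      have hSG : Summable (fun v : ↥V => ‖CG (v : EuclideanSpace ℝ (Fin m))‖ ^ 2) :=
        frame_summable hA₂ hfrV hf₂
      set D : EuclideanSpace ℝ (Fin n) × EuclideanSpace ℝ (Fin m) → ℝ :=
        fun l => ‖CF l.1 + CG l.2‖ ^ 2 with hDdef
      have hDnn : ∀ l, 0 ≤ D l := fun l => by simp only [hDdef]; positivity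
      have hcoefΛ : ∀ l : EuclideanSpace ℝ (Fin n) × EuclideanSpace ℝ (Fin m),
          ∫ p, f p * (starRingEnd ℂ) (fexp l.1 p.1 * fexp l.2 p.2)
            ∂(Measure.map (fun x => (x, (0 : EuclideanSpace ℝ (Fin m)))) μ
              + Measure.map (fun y => ((0 : EuclideanSpace ℝ (Fin n)), y)) ν)
          = CF l.1 + CG l.2 := fun l => coef_split hf l.1 l.2
      -- summability over the product index sets
      have hSF2 : Summable (fun p : Fin k × ↥U => ‖CF ((p.2 : ↥U) : EuclideanSpace ℝ (Fin n))‖ ^ 2) :=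
        summable_snd (h := fun u : ↥U => ‖CF ((u : ↥U) : EuclideanSpace ℝ (Fin n))‖ ^ 2)
          (fun u => by positivity) hSF
      have hSG2 : Summable (fun q : Fin k' × ↥V => ‖CG ((q.2 : ↥V) : EuclideanSpace ℝ (Fin m))‖ ^ 2) :=
        summable_snd (h := fun v : ↥V => ‖CG ((v : ↥V) : EuclideanSpace ℝ (Fin m))‖ ^ 2)
          (fun v => by positivity) hSG
      have hSGψ : Summable (fun p : Fin k × ↥U => ‖CG ((ψ p : ↥V) : EuclideanSpace ℝ (Fin m))‖ ^ 2) :=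
        hSG.comp_injective hψinj
      have hSFψ' : Summable (fun q : Fin k' × ↥V => ‖CF ((ψ' q : ↥U) : EuclideanSpace ℝ (Fin n))‖ ^ 2) :=
        hSF.comp_injective hψ'inj
      have hS1sum : Summable (fun p : Fin k × ↥U => D (Φ₁ p)) := by
        refine Summable.of_nonneg_of_le (fun p => hDnn _) (fun p => ?_)
          ((hSF2.mul_left 2).add (hSGψ.mul_left 2))
        exact normsq_add_upper (CF ((p.2 : ↥U) : EuclideanSpace ℝ (Fin n)))
          (CG ((ψ p : ↥V) : EuclideanSpace ℝ (Fin m)))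
      have hS2sum : Summable (fun q : Fin k' × ↥V => D (Φ₂ q)) := by
        refine Summable.of_nonneg_of_le (fun q => hDnn _) (fun q => ?_)
          ((hSFψ'.mul_left 2).add (hSG2.mul_left 2))
        exact normsq_add_upper (CF ((ψ' q : ↥U) : EuclideanSpace ℝ (Fin n)))
          (CG ((q.2 : ↥V) : EuclideanSpace ℝ (Fin m)))
      -- injective comparison sums
      have hinj1 : (∑' p : Fin k × ↥U, ‖CG ((ψ p : ↥V) : EuclideanSpace ℝ (Fin m))‖ ^ 2) ≤ SV :=
        Summable.tsum_le_tsum_of_inj ψ hψinj (fun c _ => by positivity) (fun p => le_rfl) hSGψ hSG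
      have hinj2 : (∑' q : Fin k' × ↥V, ‖CF ((ψ' q : ↥U) : EuclideanSpace ℝ (Fin n))‖ ^ 2) ≤ SU :=
        Summable.tsum_le_tsum_of_inj ψ' hψ'inj (fun c _ => by positivity) (fun q => le_rfl) hSFψ' hSF
      have hGψnn : 0 ≤ ∑' p : Fin k × ↥U, ‖CG ((ψ p : ↥V) : EuclideanSpace ℝ (Fin m))‖ ^ 2 :=
        tsum_nonneg fun p => by positivity
      have hFψ'nn : 0 ≤ ∑' q : Fin k' × ↥V, ‖CF ((ψ' q : ↥U) : EuclideanSpace ℝ (Fin n))‖ ^ 2 :=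
        tsum_nonneg fun q => by positivity
      have hprod1 : (∑' p : Fin k × ↥U, ‖CF ((p.2 : ↥U) : EuclideanSpace ℝ (Fin n))‖ ^ 2)
          = (k:ℝ) * SU :=
        tsum_snd_const (fun u : ↥U => ‖CF ((u : ↥U) : EuclideanSpace ℝ (Fin n))‖ ^ 2) hSF2
      have hprod2 : (∑' q : Fin k' × ↥V, ‖CG ((q.2 : ↥V) : EuclideanSpace ℝ (Fin m))‖ ^ 2)
          = (k':ℝ) * SV :=
        tsum_snd_const (fun v : ↥V => ‖CG ((v : ↥V) : EuclideanSpace ℝ (Fin m))‖ ^ 2) hSG2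
      -- upper bound for T1
      have hT1up : (∑' p : Fin k × ↥U, D (Φ₁ p)) ≤ 2 * ((k:ℝ) * SU) + 2 * SV := by
        have hstep : (∑' p : Fin k × ↥U, D (Φ₁ p)) ≤
            ∑' p : Fin k × ↥U, (2 * ‖CF ((p.2 : ↥U) : EuclideanSpace ℝ (Fin n))‖ ^ 2
              + 2 * ‖CG ((ψ p : ↥V) : EuclideanSpace ℝ (Fin m))‖ ^ 2) := by
          refine Summable.tsum_le_tsum (fun p => ?_) hS1sum ((hSF2.mul_left 2).add (hSGψ.mul_left 2))
          exact normsq_add_upper _ _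
        rw [Summable.tsum_add (hSF2.mul_left 2) (hSGψ.mul_left 2), tsum_mul_left, tsum_mul_left,
          hprod1] at hstep
        linarith
      have hT2up : (∑' q : Fin k' × ↥V, D (Φ₂ q)) ≤ 2 * ((k':ℝ) * SV) + 2 * SU := by
        have hstep : (∑' q : Fin k' × ↥V, D (Φ₂ q)) ≤
            ∑' q : Fin k' × ↥V, (2 * ‖CG ((q.2 : ↥V) : EuclideanSpace ℝ (Fin m))‖ ^ 2
              + 2 * ‖CF ((ψ' q : ↥U) : EuclideanSpace ℝ (Fin n))‖ ^ 2) := by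
          refine Summable.tsum_le_tsum (fun q => ?_) hS2sum ((hSG2.mul_left 2).add (hSFψ'.mul_left 2))
          have hb := normsq_add_upper (CF ((ψ' q : ↥U) : EuclideanSpace ℝ (Fin n)))
            (CG ((q.2 : ↥V) : EuclideanSpace ℝ (Fin m)))
          have hDq : D (Φ₂ q) = ‖CF ((ψ' q : ↥U) : EuclideanSpace ℝ (Fin n))
              + CG ((q.2 : ↥V) : EuclideanSpace ℝ (Fin m))‖ ^ 2 := rfl
          rw [hDq]
          linarith
        rw [Summable.tsum_add (hSG2.mul_left 2) (hSFψ'.mul_left 2), tsum_mul_left, tsum_mul_left,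
          hprod2] at hstep
        linarith
      -- lower bounds
      have hT1low : (k:ℝ) / 2 * SU - SV ≤ ∑' p : Fin k × ↥U, D (Φ₁ p) := by
        have hstep : (∑' p : Fin k × ↥U, (1 / 2 * ‖CF ((p.2 : ↥U) : EuclideanSpace ℝ (Fin n))‖ ^ 2
              - ‖CG ((ψ p : ↥V) : EuclideanSpace ℝ (Fin m))‖ ^ 2)) ≤
            ∑' p : Fin k × ↥U, D (Φ₁ p) := by
          refine Summable.tsum_le_tsum (fun p => ?_) ((hSF2.mul_left (1 / 2)).sub hSGψ) hS1sum
          exact normsq_add_lower _ _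
        rw [Summable.tsum_sub (hSF2.mul_left (1 / 2)) hSGψ, tsum_mul_left, hprod1] at hstep
        linarith
      have hT2low : (k':ℝ) / 2 * SV - SU ≤ ∑' q : Fin k' × ↥V, D (Φ₂ q) := by
        have hstep : (∑' q : Fin k' × ↥V, (1 / 2 * ‖CG ((q.2 : ↥V) : EuclideanSpace ℝ (Fin m))‖ ^ 2
              - ‖CF ((ψ' q : ↥U) : EuclideanSpace ℝ (Fin n))‖ ^ 2)) ≤
            ∑' q : Fin k' × ↥V, D (Φ₂ q) := by
          refine Summable.tsum_le_tsum (fun q => ?_) ((hSG2.mul_left (1 / 2)).sub hSFψ') hS2sum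
          have := normsq_add_lower (CG ((q.2 : ↥V) : EuclideanSpace ℝ (Fin m)))
            (CF ((ψ' q : ↥U) : EuclideanSpace ℝ (Fin n)))
          have hcomm : ‖CG ((q.2 : ↥V) : EuclideanSpace ℝ (Fin m))
              + CF ((ψ' q : ↥U) : EuclideanSpace ℝ (Fin n))‖
              = ‖CF ((ψ' q : ↥U) : EuclideanSpace ℝ (Fin n))
              + CG ((q.2 : ↥V) : EuclideanSpace ℝ (Fin m))‖ := by rw [add_comm]
          rw [hcomm] at this
          exact this
        rw [Summable.tsum_sub (hSG2.mul_left (1 / 2)) hSFψ', tsum_mul_left, hprod2] at hstep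
        linarith
      -- relate subtype sums over the ranges
      have hS1sub : Summable (fun x : ↥(Set.range Φ₁) => D ↑x) :=
        (tsum_range_eq D Φ₁ hΦ₁inj).1 hS1sum
      have hS2sub : Summable (fun x : ↥(Set.range Φ₂) => D ↑x) :=
        (tsum_range_eq D Φ₂ hΦ₂inj).1 hS2sum
      have hT1eq : (∑' x : ↥(Set.range Φ₁), D ↑x) = ∑' p : Fin k × ↥U, D (Φ₁ p) :=
        (tsum_range_eq D Φ₁ hΦ₁inj).2
      have hT2eq : (∑' x : ↥(Set.range Φ₂), D ↑x) = ∑' q : Fin k' × ↥V, D (Φ₂ q) :=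
        (tsum_range_eq D Φ₂ hΦ₂inj).2
      obtain ⟨hΛsum, hΛge1, hΛle⟩ := tsum_union_est hDnn hS1sub hS2sub
      have hΛge2 : (∑' x : ↥(Set.range Φ₂), D ↑x)
          ≤ ∑' x : ↥(Set.range Φ₁ ∪ Set.range Φ₂), D ↑x := by
        obtain ⟨-, h, -⟩ := tsum_union_est hDnn hS2sub hS1sub
        rw [Set.union_comm] at h
        exact h
      -- translate the goal
      have hgoal : (∑' (i : ↥(Set.range Φ₁ ∪ Set.range Φ₂)),
          ‖∫ p, f p * (starRingEnd ℂ)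
            (fexp ((i : EuclideanSpace ℝ (Fin n) × EuclideanSpace ℝ (Fin m))).1 p.1 *
             fexp ((i : EuclideanSpace ℝ (Fin n) × EuclideanSpace ℝ (Fin m))).2 p.2)
            ∂(Measure.map (fun x => (x, (0 : EuclideanSpace ℝ (Fin m)))) μ
              + Measure.map (fun y => ((0 : EuclideanSpace ℝ (Fin n)), y)) ν)‖ ^ 2)
          = ∑' x : ↥(Set.range Φ₁ ∪ Set.range Φ₂), D ↑x := by
        refine tsum_congr fun i => ?_
        rw [hcoefΛ (i : EuclideanSpace ℝ (Fin n) × EuclideanSpace ℝ (Fin m))]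
      rw [norm_split hf, hgoal]
      constructor
      · -- lower frame bound
        have key1 : (B₁ + 1) * N₁ - SV ≤ ∑' p : Fin k × ↥U, D (Φ₁ p) := by
          have h5 : (2 * B₁ + 2) * N₁ ≤ ((k:ℝ) * A₁) * N₁ :=
            mul_le_mul_of_nonneg_right hkA hN₁nn
          have h7 : (k:ℝ) * (A₁ * N₁) ≤ (k:ℝ) * SU :=
            mul_le_mul_of_nonneg_left hUlow hkc
          nlinarith [hT1low]
        have key2 : (B₂ + 1) * N₂ - SU ≤ ∑' q : Fin k' × ↥V, D (Φ₂ q) := by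
          have h5 : (2 * B₂ + 2) * N₂ ≤ ((k':ℝ) * A₂) * N₂ :=
            mul_le_mul_of_nonneg_right hk'A hN₂nn
          have h7 : (k':ℝ) * (A₂ * N₂) ≤ (k':ℝ) * SV :=
            mul_le_mul_of_nonneg_left hVlow hk'c
          nlinarith [hT2low]
        rw [← hT1eq] at key1
        rw [← hT2eq] at key2
        nlinarith [hΛge1, hΛge2, hUup, hVup]
      · -- upper frame bound
        have h1 : (∑' x : ↥(Set.range Φ₁), D ↑x) ≤ 2 * ((k:ℝ) * SU) + 2 * SV := by
          rw [hT1eq]; exact hT1up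
        have h2 : (∑' x : ↥(Set.range Φ₂), D ↑x) ≤ 2 * ((k':ℝ) * SV) + 2 * SU := by
          rw [hT2eq]; exact hT2up
        have hkSU : (k:ℝ) * SU ≤ (k:ℝ) * (B₁ * N₁) := mul_le_mul_of_nonneg_left hUup hkc
        have hk'SV : (k':ℝ) * SV ≤ (k':ℝ) * (B₂ * N₂) := mul_le_mul_of_nonneg_left hVup hk'c
        nlinarith [hΛle, mul_nonneg (mul_nonneg hkc hB₁.le) hN₂nn,
          mul_nonneg (mul_nonneg hk'c hB₂.le) hN₁nn,
          mul_nonneg hB₁.le hN₂nn, mul_nonneg hB₂.le hN₁nn,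
          mul_nonneg (mul_nonneg hkc hB₁.le) hN₁nn,
          mul_nonneg (mul_nonneg hk'c hB₂.le) hN₂nn]
end

section
/- Let μ be a positive finite Borel measure on ℝ^d, 0 < β ≤ d, and suppose there exists φ ∈ L²(μ) with ‖φ‖_{L²(μ)} > 0 such that the complex measure ν = φμ satisfies |ν̂(t)| ≤ C₁ |t|^{−β/2} for all t ∈ ℝ^d. Suppose E(Λ) is a frame in L²(μ) and #(Λ ∩ B(0,r)) ≤ C r^α for all r ≥ 1. Then α ≥ (1/β + 1/d)^{−1}. -/
open MeasureTheory Complex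

lemma pigeonhole_far_point {d : ℕ} (hd : 0 < d) (Λ : Set (EuclideanSpace ℝ (Fin d)))
    (a K : ℝ)
    (hcount : ∀ r : ℝ, 1 ≤ r →
      (Λ ∩ Metric.ball (0 : EuclideanSpace ℝ (Fin d)) r).Finite ∧
      ((Λ ∩ Metric.ball (0 : EuclideanSpace ℝ (Fin d)) r).ncard : ℝ) ≤ K * r ^ a)
    (R ρ : ℝ) (hR : 1 ≤ R) (hρ : 0 < ρ) (hρR : ρ ≤ R)
    (hsmall : K * (2 * R) ^ a * ρ ^ d < R ^ d) :
    ∃ y : EuclideanSpace ℝ (Fin d), ‖y‖ < R ∧ ∀ l ∈ Λ, ρ ≤ dist y l := by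
  haveI : Nonempty (Fin d) := ⟨⟨0, hd⟩⟩
  have h2R : (1 : ℝ) ≤ 2 * R := by linarith
  obtain ⟨hfin, hcard⟩ := hcount (2 * R) h2R
  set Sf : Finset (EuclideanSpace ℝ (Fin d)) := hfin.toFinset with hSf
  set U : Set (EuclideanSpace ℝ (Fin d)) := ⋃ l ∈ Sf, Metric.ball l ρ with hU
  set v : ENNReal := volume (Metric.ball (0 : EuclideanSpace ℝ (Fin d)) 1) with hv
  have hv0 : v ≠ 0 := (Metric.measure_ball_pos volume _ one_pos).ne'
  have hvt : v ≠ ⊤ := measure_ball_lt_top.ne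
  have hballvol : ∀ (x : EuclideanSpace ℝ (Fin d)) (r : ℝ), 0 ≤ r →
      volume (Metric.ball x r) = ENNReal.ofReal (r ^ d) * v := by
    intro x r hr
    rw [Measure.addHaar_ball volume x hr, finrank_euclideanSpace_fin]
  have hcard' : (Sf.card : ℝ) ≤ K * (2 * R) ^ a := by
    rw [Set.ncard_eq_toFinset_card _ hfin] at hcard; exact hcard
  have hUvol : volume U < volume (Metric.ball (0 : EuclideanSpace ℝ (Fin d)) R) := by
    calc volume U ≤ ∑ l ∈ Sf, volume (Metric.ball l ρ) := measure_biUnion_finset_le _ _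
      _ = (Sf.card : ENNReal) * (ENNReal.ofReal (ρ ^ d) * v) := by
          rw [Finset.sum_congr rfl fun l _ => hballvol l ρ hρ.le, Finset.sum_const,
            nsmul_eq_mul]
      _ = ENNReal.ofReal ((Sf.card : ℝ) * ρ ^ d) * v := by
          rw [ENNReal.ofReal_mul (by positivity), ENNReal.ofReal_natCast, mul_assoc]
      _ < ENNReal.ofReal (R ^ d) * v := by
          refine ENNReal.mul_lt_mul_left hv0 hvt ?_
          refine (ENNReal.ofReal_lt_ofReal_iff (by positivity)).mpr ?_
          calc (Sf.card : ℝ) * ρ ^ d ≤ K * (2 * R) ^ a * ρ ^ d := by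
                apply mul_le_mul_of_nonneg_right hcard' (by positivity)
            _ < R ^ d := hsmall
      _ = volume (Metric.ball (0 : EuclideanSpace ℝ (Fin d)) R) :=
          (hballvol 0 R (by linarith)).symm
  have hnot : ¬ (Metric.ball (0 : EuclideanSpace ℝ (Fin d)) R ⊆ U) := fun h =>
    absurd (measure_mono h) (not_le.mpr hUvol)
  obtain ⟨y, hyB, hyU⟩ := Set.not_subset.mp hnot
  refine ⟨y, by simpa [Metric.mem_ball, dist_zero_right] using hyB, ?_⟩
  intro l hl
  by_cases hlin : l ∈ Metric.ball (0 : EuclideanSpace ℝ (Fin d)) (2 * R)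
  · have hlS : l ∈ Sf := by
      rw [hSf, Set.Finite.mem_toFinset]; exact ⟨hl, hlin⟩
    have : y ∉ Metric.ball l ρ := fun h => hyU (Set.mem_biUnion hlS h)
    simpa [Metric.mem_ball, not_lt] using this
  · have h1 : 2 * R ≤ dist l 0 := by
      simpa [Metric.mem_ball, not_lt] using hlin
    have h2 : dist y 0 < R := by simpa [Metric.mem_ball] using hyB
    have h3 : dist l 0 ≤ dist l y + dist y 0 := dist_triangle _ _ _
    have : R ≤ dist l y := by linarith
    rw [dist_comm]; linarith

lemma shell_sum_bound {d : ℕ} (Λ : Set (EuclideanSpace ℝ (Fin d)))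
    (a K β : ℝ) (ha0 : 0 ≤ a) (hK : 1 ≤ K) (hβ : 0 < β) (haβ : a < β)
    (hcount : ∀ r : ℝ, 1 ≤ r →
      (Λ ∩ Metric.ball (0 : EuclideanSpace ℝ (Fin d)) r).Finite ∧
      ((Λ ∩ Metric.ball (0 : EuclideanSpace ℝ (Fin d)) r).ncard : ℝ) ≤ K * r ^ a)
    (y : EuclideanSpace ℝ (Fin d)) (R ρ : ℝ) (hR : 1 ≤ R) (hρ : 0 < ρ) (hρR : ρ ≤ R)
    (hy : ‖y‖ < R) (hsep : ∀ l ∈ Λ, ρ ≤ dist y l) (F : Finset ↥Λ) :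
    ∑ l ∈ F, (dist (l : EuclideanSpace ℝ (Fin d)) y) ^ (-β) ≤
      K * 4 ^ a * (1 - (2:ℝ) ^ (a - β))⁻¹ * (R ^ a * ρ ^ (-β)) := by
  classical
  set q : ℝ := (2:ℝ) ^ (a - β) with hqdef
  have hq0 : (0:ℝ) ≤ q := (Real.rpow_pos_of_pos two_pos _).le
  have hq1 : q < 1 := Real.rpow_lt_one_of_one_lt_of_neg one_lt_two (by linarith)
  have hex : ∀ l : ↥Λ, ∃ k : ℕ, dist (l : EuclideanSpace ℝ (Fin d)) y < 2 ^ (k+1) * ρ := by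
    intro l
    obtain ⟨m, hm⟩ := pow_unbounded_of_one_lt
      (dist (l : EuclideanSpace ℝ (Fin d)) y / ρ) (one_lt_two (α := ℝ))
    refine ⟨m, ?_⟩
    have h1 : dist (l : EuclideanSpace ℝ (Fin d)) y < 2 ^ m * ρ := by
      rw [div_lt_iff₀ hρ] at hm; linarith [hm]
    have h2 : (2:ℝ) ^ m * ρ ≤ 2 ^ (m+1) * ρ :=
      mul_le_mul_of_nonneg_right
        (pow_le_pow_right₀ (one_le_two (α := ℝ)) (by omega : m ≤ m + 1)) hρ.le
    linarith
  set κ : ↥Λ → ℕ := fun l => Nat.find (hex l) with hκdef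
  have hκ1 : ∀ l : ↥Λ, dist (l : EuclideanSpace ℝ (Fin d)) y < 2 ^ (κ l + 1) * ρ :=
    fun l => Nat.find_spec (hex l)
  have hκ2 : ∀ l : ↥Λ, 2 ^ (κ l) * ρ ≤ dist (l : EuclideanSpace ℝ (Fin d)) y := by
    intro l
    rcases Nat.eq_zero_or_pos (κ l) with h | h
    · rw [h]
      simpa [dist_comm] using hsep (l : EuclideanSpace ℝ (Fin d)) l.2
    · have hmin : ¬ dist (l : EuclideanSpace ℝ (Fin d)) y < 2 ^ (κ l - 1 + 1) * ρ :=
        Nat.find_min (hex l) (Nat.sub_lt h one_pos)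
      have heq : κ l - 1 + 1 = κ l := by omega
      rw [heq] at hmin
      exact not_lt.mp hmin
  set n : ℕ := F.sup κ + 1 with hndef
  have hmaps : ∀ l ∈ F, κ l ∈ Finset.range n :=
    fun l hl => Finset.mem_range.mpr (Nat.lt_succ_of_le (Finset.le_sup hl))
  set c0 : ℝ := K * 4 ^ a * (R ^ a * ρ ^ (-β)) with hc0def
  have hc0 : 0 ≤ c0 := by positivity
  have hfiber : ∀ k : ℕ,
      ∑ l ∈ F.filter (fun l => κ l = k), (dist (l : EuclideanSpace ℝ (Fin d)) y) ^ (-β)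
        ≤ c0 * q ^ k := by
    intro k
    set G := F.filter (fun l => κ l = k) with hGdef
    have hterm : ∀ l ∈ G, (dist (l : EuclideanSpace ℝ (Fin d)) y) ^ (-β) ≤
        ((2:ℝ) ^ k * ρ) ^ (-β) := by
      intro l hl
      have hkl : κ l = k := (Finset.mem_filter.mp hl).2
      have := hκ2 l
      rw [hkl] at this
      exact Real.rpow_le_rpow_of_nonpos (by positivity) this (by linarith)
    have hsum1 : ∑ l ∈ G, (dist (l : EuclideanSpace ℝ (Fin d)) y) ^ (-β) ≤
        (G.card : ℝ) * ((2:ℝ) ^ k * ρ) ^ (-β) := by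
      have := Finset.sum_le_card_nsmul G _ _ hterm
      rwa [nsmul_eq_mul] at this
    set r : ℝ := R + 2 ^ (k+1) * ρ with hrdef
    have hr1 : 1 ≤ r := by
      have : (0:ℝ) < 2 ^ (k+1) * ρ := by positivity
      rw [hrdef]; linarith
    have hcardG : (G.card : ℝ) ≤ K * r ^ a := by
      have hinj := Finset.card_image_of_injective G (Subtype.val_injective
        (p := fun x => x ∈ Λ))
      have hsub : ↑(G.image Subtype.val) ⊆ Λ ∩ Metric.ball (0 : EuclideanSpace ℝ (Fin d)) r := by
        intro x hx
        simp only [Finset.coe_image, Set.mem_image, Finset.mem_coe] at hx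
        obtain ⟨l, hlG, rfl⟩ := hx
        refine ⟨l.2, ?_⟩
        have hkl : κ l = k := (Finset.mem_filter.mp hlG).2
        have h1 := hκ1 l
        rw [hkl] at h1
        have h2 : dist (l : EuclideanSpace ℝ (Fin d)) 0 ≤
            dist (l : EuclideanSpace ℝ (Fin d)) y + dist y 0 := dist_triangle _ _ _
        have h3 : dist y 0 < R := by simpa [dist_zero_right] using hy
        rw [Metric.mem_ball]
        rw [hrdef]; linarith
      have hle : (G.image Subtype.val).card ≤
          (Λ ∩ Metric.ball (0 : EuclideanSpace ℝ (Fin d)) r).ncard := by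
        rw [← Set.ncard_coe_finset]
        exact Set.ncard_le_ncard hsub (hcount r hr1).1
      calc (G.card : ℝ) = ((G.image Subtype.val).card : ℝ) := by rw [hinj]
        _ ≤ ((Λ ∩ Metric.ball (0 : EuclideanSpace ℝ (Fin d)) r).ncard : ℝ) := by
            exact_mod_cast hle
        _ ≤ K * r ^ a := (hcount r hr1).2
    have hra : r ^ a ≤ ((2:ℝ) ^ (k+2) * R) ^ a := by
      apply Real.rpow_le_rpow (by rw [hrdef]; positivity) _ ha0
      have h1 : (1:ℝ) ≤ 2 ^ (k+1) := one_le_pow₀ (one_le_two (α := ℝ))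
      have h2 : (2:ℝ) ^ (k+1) * ρ ≤ 2 ^ (k+1) * R := by nlinarith
      have h3 : (2:ℝ) ^ (k+2) = 2 ^ (k+1) + 2 ^ (k+1) := by ring
      rw [hrdef, h3]
      nlinarith
    have hkey : K * ((2:ℝ) ^ (k+2) * R) ^ a * ((2:ℝ) ^ k * ρ) ^ (-β) = c0 * q ^ k := by
      have e0 : ((2:ℝ) ^ (k+2) * R) ^ a = ((2:ℝ)^(k+2) : ℝ) ^ a * R ^ a :=
        Real.mul_rpow (by positivity) (by linarith)
      have e0' : ((2:ℝ) ^ k * ρ) ^ (-β) = ((2:ℝ)^k : ℝ) ^ (-β) * ρ ^ (-β) :=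
        Real.mul_rpow (by positivity) hρ.le
      have e1 : ((2:ℝ)^(k+2) : ℝ) ^ a = 4 ^ a * ((2:ℝ) ^ a) ^ k := by
        have : (2:ℝ)^(k+2) = 2^k * 4 := by ring
        rw [this, Real.mul_rpow (by positivity) (by norm_num), ← Real.rpow_natCast (2:ℝ) k,
          ← Real.rpow_mul (by norm_num), ← Real.rpow_natCast ((2:ℝ) ^ a) k,
          ← Real.rpow_mul (by norm_num), mul_comm (k:ℝ) a, mul_comm]
      have e2 : ((2:ℝ)^k : ℝ) ^ (-β) = ((2:ℝ) ^ (-β)) ^ k := by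
        rw [← Real.rpow_natCast (2:ℝ) k, ← Real.rpow_mul (by norm_num),
          ← Real.rpow_natCast ((2:ℝ) ^ (-β)) k, ← Real.rpow_mul (by norm_num),
          mul_comm (k:ℝ) (-β)]
      have e3 : ((2:ℝ) ^ a) ^ k * ((2:ℝ) ^ (-β)) ^ k = q ^ k := by
        rw [← mul_pow, hqdef, ← Real.rpow_add two_pos, sub_eq_add_neg]
      rw [e0, e0', e1, e2, hc0def]
      rw [← e3]; ring
    calc ∑ l ∈ G, (dist (l : EuclideanSpace ℝ (Fin d)) y) ^ (-β)
        ≤ (G.card : ℝ) * ((2:ℝ) ^ k * ρ) ^ (-β) := hsum1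
      _ ≤ K * r ^ a * ((2:ℝ) ^ k * ρ) ^ (-β) := by
          apply mul_le_mul_of_nonneg_right hcardG (by positivity)
      _ ≤ K * ((2:ℝ) ^ (k+2) * R) ^ a * ((2:ℝ) ^ k * ρ) ^ (-β) := by
          have hK0 : (0:ℝ) ≤ K := by linarith
          have : (0:ℝ) ≤ ((2:ℝ) ^ k * ρ) ^ (-β) := by positivity
          nlinarith [mul_le_mul_of_nonneg_left hra hK0]
      _ = c0 * q ^ k := hkey
  calc ∑ l ∈ F, (dist (l : EuclideanSpace ℝ (Fin d)) y) ^ (-β)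
      = ∑ k ∈ Finset.range n, ∑ l ∈ F.filter (fun l => κ l = k),
          (dist (l : EuclideanSpace ℝ (Fin d)) y) ^ (-β) :=
        (Finset.sum_fiberwise_of_maps_to hmaps _).symm
    _ ≤ ∑ k ∈ Finset.range n, c0 * q ^ k := Finset.sum_le_sum (fun k _ => hfiber k)
    _ = c0 * ∑ k ∈ Finset.range n, q ^ k := by rw [Finset.mul_sum]
    _ ≤ c0 * (1 - q)⁻¹ := by
        apply mul_le_mul_of_nonneg_left _ hc0
        have hsummable : Summable (fun k : ℕ => q ^ k) := summable_geometric_of_lt_one hq0 hq1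
        have := Summable.sum_le_tsum (Finset.range n) (fun i _ => pow_nonneg hq0 i) hsummable
        rwa [tsum_geometric_of_lt_one hq0 hq1] at this
    _ = K * 4 ^ a * (1 - q)⁻¹ * (R ^ a * ρ ^ (-β)) := by rw [hc0def]; ring

lemma frame_term_eq {d : ℕ} (μ : Measure (EuclideanSpace ℝ (Fin d)))
    (φ : EuclideanSpace ℝ (Fin d) → ℂ) (y l : EuclideanSpace ℝ (Fin d)) :
    ∫ x, (fexp y x * φ x) * (starRingEnd ℂ) (fexp l x) ∂μ =
      ∫ x, Complex.exp ((((-2) * Real.pi * (inner ℝ (l - y) x : ℝ) : ℝ) : ℂ) * Complex.I) * φ x ∂μ := by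
  apply integral_congr_ae
  filter_upwards with x
  have hconj : (starRingEnd ℂ) (fexp l x) =
      Complex.exp (-((((2 * Real.pi * (inner ℝ l x : ℝ) : ℝ)) : ℂ) * Complex.I)) := by
    rw [fexp, ← Complex.exp_conj, map_mul, Complex.conj_I, Complex.conj_ofReal, mul_neg]
  rw [hconj, fexp, mul_comm (Complex.exp _) (φ x), mul_assoc, ← Complex.exp_add]
  rw [mul_comm]
  congr 1
  have hinner : (inner ℝ (l - y) x : ℝ) = (inner ℝ l x : ℝ) - (inner ℝ y x : ℝ) := inner_sub_left l y x
  rw [hinner]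
  push_cast
  ring

set_option maxHeartbeats 1000000 in
/-- Lemma 2.2: if `ν = φμ` has Fourier decay `|ν̂(t)| ≤ C₁ |t|^{−β/2}`, `E(Λ)` is a frame in
`L²(μ)`, and `#(Λ ∩ B(0,r)) ≤ C r^α`, then `α ≥ (1/β + 1/d)⁻¹`. -/
theorem frame_counting_lower_bound {d : ℕ} (μ : Measure (EuclideanSpace ℝ (Fin d)))
    [IsFiniteMeasure μ] (β : ℝ) (hβ0 : 0 < β) (hβd : β ≤ (d : ℝ))
    (φ : EuclideanSpace ℝ (Fin d) → ℂ) (hφ : MeasureTheory.MemLp φ 2 μ)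
    (hφpos : 0 < ∫ x, ‖φ x‖ ^ 2 ∂μ) (C₁ : ℝ)
    (hdecay : ∀ t : EuclideanSpace ℝ (Fin d), t ≠ 0 →
      ‖∫ x, Complex.exp ((((-2) * Real.pi * (inner ℝ t x : ℝ) : ℝ) : ℂ) * Complex.I) * φ x ∂μ‖
        ≤ C₁ * ‖t‖ ^ (-(β / 2)))
    (Λ : Set (EuclideanSpace ℝ (Fin d))) (hΛ : Λ.Countable)
    (A B : ℝ) (hA : 0 < A) (hAB : A ≤ B)
    (hframe : IsFrameWith μ (fun l : Λ => fexp (l : EuclideanSpace ℝ (Fin d))) A B)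
    (α C : ℝ)
    (hcount : ∀ r : ℝ, 1 ≤ r →
      (Λ ∩ Metric.ball (0 : EuclideanSpace ℝ (Fin d)) r).Finite ∧
      ((Λ ∩ Metric.ball (0 : EuclideanSpace ℝ (Fin d)) r).ncard : ℝ) ≤ C * r ^ α) :
    (1 / β + 1 / (d : ℝ))⁻¹ ≤ α := by
  by_contra hcon
  push_neg at hcon
  have hdpos : (0:ℝ) < d := lt_of_lt_of_le hβ0 hβd
  have hd : 0 < d := by exact_mod_cast hdpos
  have hα₀pos : 0 < (1/β + 1/(d:ℝ))⁻¹ := by positivity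
  have hα₀β : (1/β + 1/(d:ℝ))⁻¹ ≤ β := by
    have h1 : 1/β ≤ 1/β + 1/(d:ℝ) := by
      have : 0 < 1/(d:ℝ) := by positivity
      linarith
    have h2 := one_div_le_one_div_of_le (show (0:ℝ) < 1/β by positivity) h1
    rw [one_div_one_div] at h2
    rwa [one_div] at h2
  have hα₀d : (1/β + 1/(d:ℝ))⁻¹ ≤ (d:ℝ) := by
    have h1 : 1/(d:ℝ) ≤ 1/β + 1/(d:ℝ) := by
      have : 0 < 1/β := by positivity
      linarith
    have h2 := one_div_le_one_div_of_le (show (0:ℝ) < 1/(d:ℝ) by positivity) h1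
    rw [one_div_one_div] at h2
    rwa [one_div] at h2
  set a : ℝ := max α 0 with hadef
  set K : ℝ := max C 1 with hKdef
  have ha0 : 0 ≤ a := le_max_right _ _
  have haα : α ≤ a := le_max_left _ _
  have hK1 : 1 ≤ K := le_max_right _ _
  have hCK : C ≤ K := le_max_left _ _
  have hK0 : (0:ℝ) < K := lt_of_lt_of_le one_pos hK1
  have ha_lt : a < (1/β + 1/(d:ℝ))⁻¹ := max_lt hcon hα₀pos
  have haβ : a < β := lt_of_lt_of_le ha_lt hα₀β
  have had : a < (d:ℝ) := lt_of_lt_of_le ha_lt hα₀d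
  have hcount' : ∀ r : ℝ, 1 ≤ r →
      (Λ ∩ Metric.ball (0 : EuclideanSpace ℝ (Fin d)) r).Finite ∧
      ((Λ ∩ Metric.ball (0 : EuclideanSpace ℝ (Fin d)) r).ncard : ℝ) ≤ K * r ^ a := by
    intro r hr
    refine ⟨(hcount r hr).1, ?_⟩
    calc ((Λ ∩ Metric.ball (0 : EuclideanSpace ℝ (Fin d)) r).ncard : ℝ)
        ≤ C * r ^ α := (hcount r hr).2
      _ ≤ K * r ^ α := mul_le_mul_of_nonneg_right hCK (Real.rpow_nonneg (by linarith) _)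
      _ ≤ K * r ^ a := mul_le_mul_of_nonneg_left
          (Real.rpow_le_rpow_of_exponent_le hr haα) hK0.le
  set θ : ℝ := ((d:ℝ) - a)/d with hθdef
  have hθpos : 0 < θ := div_pos (by linarith) hdpos
  have hθ1 : θ ≤ 1 := by rw [hθdef, div_le_one hdpos]; linarith
  set c : ℝ := ((2:ℝ) ^ (a+1) * K) ^ (-(1/(d:ℝ))) with hcdef
  have hbase1 : (1:ℝ) ≤ (2:ℝ) ^ (a+1) * K := by
    have h1 : (1:ℝ) ≤ (2:ℝ) ^ (a+1) := by
      have := Real.rpow_le_rpow_of_exponent_le (one_le_two (α := ℝ)) (by linarith : (0:ℝ) ≤ a+1)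
      rwa [Real.rpow_zero] at this
    nlinarith
  have hbase0 : (0:ℝ) < (2:ℝ) ^ (a+1) * K := by positivity
  have hc0 : 0 < c := Real.rpow_pos_of_pos hbase0 _
  have hc1 : c ≤ 1 := Real.rpow_le_one_of_one_le_of_nonpos hbase1 (neg_nonpos.mpr (by positivity))
  set e : ℝ := θ * β - a with hedef
  have hαeq : (1/β + 1/(d:ℝ))⁻¹ = β * d / (β + d) := by
    rw [show 1/β + 1/(d:ℝ) = (β + d)/(β * d) by field_simp; ring, inv_div]
  have he : 0 < e := by
    have h1 : a < β * d / (β + d) := by rwa [hαeq] at ha_lt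
    have h2 : a * (β + (d:ℝ)) < β * d := by
      rw [lt_div_iff₀ (by linarith : (0:ℝ) < β + d)] at h1
      linarith [h1]
    have h3 : a < ((d:ℝ) - a) * β / d := by
      rw [lt_div_iff₀ hdpos]; nlinarith
    have h4 : θ * β = ((d:ℝ) - a) * β / d := by rw [hθdef]; ring
    rw [hedef, h4]; linarith
  have hgeom : 0 < 1 - (2:ℝ) ^ (a - β) := by
    have : (2:ℝ) ^ (a - β) < 1 := Real.rpow_lt_one_of_one_lt_of_neg one_lt_two (by linarith)
    linarith
  set C₂ : ℝ := max C₁ 0 with hC₂def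
  have hC₂0 : 0 ≤ C₂ := le_max_right _ _
  set c₃ : ℝ := C₂^2 * (K * 4 ^ a * (1 - (2:ℝ) ^ (a - β))⁻¹) * c ^ (-β) with hc₃def
  have hc₃0 : 0 ≤ c₃ := by
    apply mul_nonneg (mul_nonneg (by positivity) ?_) (Real.rpow_nonneg hc0.le _)
    exact mul_nonneg (mul_nonneg hK0.le (Real.rpow_nonneg (by norm_num) _))
      (inv_nonneg.mpr hgeom.le)
  have hclaim : ∀ R : ℝ, 1 ≤ R → A * (∫ x, ‖φ x‖ ^ 2 ∂μ) ≤ c₃ * R ^ (-e) := by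
    intro R hR
    have hR0 : (0:ℝ) < R := by linarith
    set ρ : ℝ := c * R ^ θ with hρdef
    have hρ0 : 0 < ρ := by positivity
    have hρR : ρ ≤ R := by
      have h1 : R ^ θ ≤ R ^ (1:ℝ) := Real.rpow_le_rpow_of_exponent_le hR hθ1
      rw [Real.rpow_one] at h1
      have h2 : (0:ℝ) < R ^ θ := Real.rpow_pos_of_pos hR0 _
      calc ρ = c * R ^ θ := hρdef
        _ ≤ 1 * R ^ θ := mul_le_mul_of_nonneg_right hc1 h2.le
        _ = R ^ θ := one_mul _
        _ ≤ R := h1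
    have hsmall : K * (2*R) ^ a * ρ ^ d < R ^ d := by
      have e1 : (ρ:ℝ) ^ d = c ^ ((d:ℝ)) * R ^ ((d:ℝ) - a) := by
        rw [← Real.rpow_natCast ρ d, hρdef,
          Real.mul_rpow hc0.le (Real.rpow_pos_of_pos hR0 θ).le, ← Real.rpow_mul hR0.le]
        congr 1
        rw [hθdef]; field_simp
      have e2 : c ^ ((d:ℝ)) = ((2:ℝ) ^ a * 2 * K)⁻¹ := by
        rw [hcdef, ← Real.rpow_mul hbase0.le,
          show -(1/(d:ℝ)) * (d:ℝ) = -1 by field_simp, Real.rpow_neg_one,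
          Real.rpow_add two_pos, Real.rpow_one]
      have e3 : ((2:ℝ)*R) ^ a = (2:ℝ) ^ a * R ^ a := Real.mul_rpow (by norm_num) hR0.le
      have e4 : R ^ a * R ^ ((d:ℝ) - a) = R ^ ((d:ℝ)) := by
        rw [← Real.rpow_add hR0]; congr 1; ring
      have e5 : (R:ℝ) ^ d = R ^ ((d:ℝ)) := (Real.rpow_natCast R d).symm
      rw [e3, e1, e2, e5]
      have hu : (0:ℝ) < (2:ℝ) ^ a := Real.rpow_pos_of_pos two_pos a
      have e6 : K * ((2:ℝ) ^ a * R ^ a) * (((2:ℝ) ^ a * 2 * K)⁻¹ * R ^ ((d:ℝ) - a))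
          = 1/2 * R ^ ((d:ℝ)) := by
        calc K * ((2:ℝ) ^ a * R ^ a) * (((2:ℝ) ^ a * 2 * K)⁻¹ * R ^ ((d:ℝ) - a))
            = (K * (2:ℝ) ^ a * ((2:ℝ) ^ a * 2 * K)⁻¹) * (R ^ a * R ^ ((d:ℝ) - a)) := by ring
          _ = 1/2 * R ^ ((d:ℝ)) := by
              rw [e4]; congr 1; field_simp
      rw [e6]
      have : (0:ℝ) < R ^ ((d:ℝ)) := Real.rpow_pos_of_pos hR0 _
      linarith
    obtain ⟨y, hy, hsep⟩ := pigeonhole_far_point hd Λ a K hcount' R ρ hR hρ0 hρR hsmall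
    have hfmem : MemLp (fun x => fexp y x * φ x) 2 μ := by
      refine MemLp.of_le hφ (((fexp_continuous y).aestronglyMeasurable).mul
        hφ.aestronglyMeasurable) (Filter.Eventually.of_forall fun x => ?_)
      rw [norm_mul, fexp, Complex.norm_exp_ofReal_mul_I, one_mul]
    have hI : (∫ x, ‖fexp y x * φ x‖ ^ 2 ∂μ) = ∫ x, ‖φ x‖ ^ 2 ∂μ := by
      apply integral_congr_ae
      filter_upwards with x
      rw [norm_mul, fexp, Complex.norm_exp_ofReal_mul_I, one_mul]
    have hlow : A * (∫ x, ‖φ x‖ ^ 2 ∂μ) ≤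
        ∑' l : ↥Λ, ‖∫ x, (fexp y x * φ x) *
          (starRingEnd ℂ) (fexp (l : EuclideanSpace ℝ (Fin d)) x) ∂μ‖ ^ 2 := by
      have h := (hframe (fun x => fexp y x * φ x) hfmem).1
      rw [hI] at h
      exact h
    have hterm : ∀ l : ↥Λ, ‖∫ x, (fexp y x * φ x) *
        (starRingEnd ℂ) (fexp (l : EuclideanSpace ℝ (Fin d)) x) ∂μ‖ ^ 2
        ≤ C₂^2 * (dist (l : EuclideanSpace ℝ (Fin d)) y) ^ (-β) := by
      intro l
      have hdistpos : 0 < dist (l : EuclideanSpace ℝ (Fin d)) y := by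
        have := hsep (l : EuclideanSpace ℝ (Fin d)) l.2
        rw [dist_comm] at this; linarith
      have hne : (l : EuclideanSpace ℝ (Fin d)) - y ≠ 0 := by
        intro h
        rw [sub_eq_zero] at h
        rw [h] at hdistpos
        simp at hdistpos
      have hnorm_eq : ‖(l : EuclideanSpace ℝ (Fin d)) - y‖ =
          dist (l : EuclideanSpace ℝ (Fin d)) y := (dist_eq_norm _ _).symm
      have hd3 : ‖∫ x, (fexp y x * φ x) *
          (starRingEnd ℂ) (fexp (l : EuclideanSpace ℝ (Fin d)) x) ∂μ‖ ≤
          C₂ * (dist (l : EuclideanSpace ℝ (Fin d)) y) ^ (-(β/2)) := by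
        rw [frame_term_eq μ φ y (l : EuclideanSpace ℝ (Fin d)), ← hnorm_eq]
        calc ‖∫ x, Complex.exp ((((-2) * Real.pi *
              (inner ℝ ((l : EuclideanSpace ℝ (Fin d)) - y) x : ℝ) : ℝ) : ℂ) * Complex.I)
              * φ x ∂μ‖
            ≤ C₁ * ‖(l : EuclideanSpace ℝ (Fin d)) - y‖ ^ (-(β/2)) := hdecay _ hne
          _ ≤ C₂ * ‖(l : EuclideanSpace ℝ (Fin d)) - y‖ ^ (-(β/2)) :=
              mul_le_mul_of_nonneg_right (le_max_left _ _)
                (Real.rpow_nonneg (norm_nonneg _) _)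
      calc ‖∫ x, (fexp y x * φ x) *
            (starRingEnd ℂ) (fexp (l : EuclideanSpace ℝ (Fin d)) x) ∂μ‖ ^ 2
          ≤ (C₂ * (dist (l : EuclideanSpace ℝ (Fin d)) y) ^ (-(β/2))) ^ 2 :=
            pow_le_pow_left₀ (norm_nonneg _) hd3 2
        _ = C₂^2 * (dist (l : EuclideanSpace ℝ (Fin d)) y) ^ (-β) := by
            rw [mul_pow]
            congr 1
            rw [← Real.rpow_natCast ((dist (l : EuclideanSpace ℝ (Fin d)) y) ^ (-(β/2))) 2,
              ← Real.rpow_mul dist_nonneg]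
            congr 1
            push_cast
            ring
    have hRa : R ^ a * ρ ^ (-β) = c ^ (-β) * R ^ (-e) := by
      have h1 : ρ ^ (-β) = c ^ (-β) * R ^ (θ * (-β)) := by
        rw [hρdef, Real.mul_rpow hc0.le (Real.rpow_pos_of_pos hR0 θ).le,
          ← Real.rpow_mul hR0.le]
      calc R ^ a * ρ ^ (-β) = c ^ (-β) * (R ^ a * R ^ (θ * (-β))) := by rw [h1]; ring
        _ = c ^ (-β) * R ^ (a + θ * (-β)) := by rw [← Real.rpow_add hR0]
        _ = c ^ (-β) * R ^ (-e) := by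
            rw [show a + θ * (-β) = -e by rw [hedef]; ring]
    have htsum_le : (∑' l : ↥Λ, ‖∫ x, (fexp y x * φ x) *
        (starRingEnd ℂ) (fexp (l : EuclideanSpace ℝ (Fin d)) x) ∂μ‖ ^ 2) ≤ c₃ * R ^ (-e) := by
      by_cases hs : Summable (fun l : ↥Λ => ‖∫ x, (fexp y x * φ x) *
          (starRingEnd ℂ) (fexp (l : EuclideanSpace ℝ (Fin d)) x) ∂μ‖ ^ 2)
      · apply Summable.tsum_le_of_sum_le hs
        intro F
        calc ∑ l ∈ F, ‖∫ x, (fexp y x * φ x) *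
              (starRingEnd ℂ) (fexp (l : EuclideanSpace ℝ (Fin d)) x) ∂μ‖ ^ 2
            ≤ ∑ l ∈ F, C₂^2 * (dist (l : EuclideanSpace ℝ (Fin d)) y) ^ (-β) :=
              Finset.sum_le_sum fun l _ => hterm l
          _ = C₂^2 * ∑ l ∈ F, (dist (l : EuclideanSpace ℝ (Fin d)) y) ^ (-β) := by
              rw [Finset.mul_sum]
          _ ≤ C₂^2 * (K * 4 ^ a * (1 - (2:ℝ) ^ (a - β))⁻¹ * (R ^ a * ρ ^ (-β))) := by
              apply mul_le_mul_of_nonneg_left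
                (shell_sum_bound Λ a K β ha0 hK1 hβ0 haβ hcount' y R ρ hR hρ0 hρR hy hsep F)
                (by positivity)
          _ = c₃ * R ^ (-e) := by rw [hRa, hc₃def]; ring
      · rw [tsum_eq_zero_of_not_summable hs]
        exact mul_nonneg hc₃0 (Real.rpow_nonneg hR0.le _)
    linarith
  have h0 : 0 < A * (∫ x, ‖φ x‖ ^ 2 ∂μ) := mul_pos hA hφpos
  have htend : Filter.Tendsto (fun R : ℝ => c₃ * R ^ (-e)) Filter.atTop (nhds 0) := by
    have := (tendsto_rpow_neg_atTop he).const_mul c₃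
    simpa using this
  have hev : ∀ᶠ R in Filter.atTop, c₃ * R ^ (-e) < A * (∫ x, ‖φ x‖ ^ 2 ∂μ) :=
    htend.eventually_lt_const h0
  obtain ⟨R, hR1, hR2⟩ := (hev.and (Filter.eventually_ge_atTop 1)).exists
  have := hclaim R hR2
  linarith
end

section
/- Let μ be a positive finite Borel measure on ℝ^d satisfying both: (i) liminf_{r→∞} r^{α−d} ∫_{|t|<r} |μ̂(t)|² dt > 0 for some 0 < α ≤ d, and (ii) there exists φ ∈ L²(μ), ‖φ‖ > 0, with |(φμ)^∧(t)| ≤ C|t|^{−β/2} for all t, for some 0 < β ≤ d. If 1/α − 1/β > 1/d, then L²(μ) does not admit any Fourier frame, i.e., there is no countable Λ ⊂ ℝ^d such that E(Λ) is a frame in L²(μ). -/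
open MeasureTheory Complex

open Metric Filter
open scoped ENNReal

section AuxLemmas

variable {d : ℕ}

lemma euclidean_nontrivial (hd : 0 < d) : Nontrivial (EuclideanSpace ℝ (Fin d)) := by
  refine ⟨EuclideanSpace.single ⟨0, hd⟩ (1:ℝ), 0, ?_⟩
  intro h
  have := congrArg (fun v : EuclideanSpace ℝ (Fin d) => v ⟨0, hd⟩) h
  simp at this

lemma norm_exp_aux (r : ℝ) : ‖Complex.exp ((r : ℂ) * Complex.I)‖ = 1 := by
  rw [Complex.norm_exp_ofReal_mul_I]

lemma rpow_neg_anti {x y b : ℝ} (hx : 0 < x) (hxy : x ≤ y) (hb : 0 ≤ b) :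
    y ^ (-b) ≤ x ^ (-b) := by
  rw [Real.rpow_neg (by linarith), Real.rpow_neg hx.le]
  exact inv_anti₀ (Real.rpow_pos_of_pos hx _) (Real.rpow_le_rpow hx.le hxy hb)

lemma fexp_mul_conj (t l x : EuclideanSpace ℝ (Fin d)) :
    fexp t x * (starRingEnd ℂ) (fexp l x)
      = Complex.exp ((((-2) * Real.pi * (inner ℝ (l - t) x : ℝ) : ℝ) : ℂ) * Complex.I) := by
  unfold fexp
  rw [← Complex.exp_conj, map_mul, Complex.conj_I, Complex.conj_ofReal, ← Complex.exp_add]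
  congr 1
  have h : (inner ℝ (l - t) x : ℝ) = (inner ℝ l x : ℝ) - (inner ℝ t x : ℝ) := inner_sub_left l t x
  rw [h]
  push_cast
  ring

-- continuity of the Fourier-type transform of an integrable density
lemma cont_transform (μ : Measure (EuclideanSpace ℝ (Fin d))) (ψ : EuclideanSpace ℝ (Fin d) → ℂ)
    (hψ : Integrable ψ μ) :
    Continuous fun t : EuclideanSpace ℝ (Fin d) =>
      ∫ x, Complex.exp ((((-2) * Real.pi * (inner ℝ t x : ℝ) : ℝ) : ℂ) * Complex.I) * ψ x ∂μ := by
  apply continuous_of_dominated (bound := fun x => ‖ψ x‖)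
  · intro t
    have hc : Continuous fun x : EuclideanSpace ℝ (Fin d) =>
        Complex.exp ((((-2) * Real.pi * (inner ℝ t x : ℝ) : ℝ) : ℂ) * Complex.I) := by
      refine Complex.continuous_exp.comp ?_
      refine (Complex.continuous_ofReal.comp ?_).mul continuous_const
      exact (continuous_const.mul (continuous_const.inner continuous_id))
    exact hc.aestronglyMeasurable.mul hψ.1
  · intro t
    filter_upwards with x
    rw [norm_mul, norm_exp_aux, one_mul]
  · exact hψ.norm
  · filter_upwards with x
    have hc : Continuous fun t : EuclideanSpace ℝ (Fin d) =>
        ((((-2) * Real.pi * (inner ℝ t x : ℝ) : ℝ) : ℂ) * Complex.I) := by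
      refine (Complex.continuous_ofReal.comp ?_).mul continuous_const
      exact (continuous_const.mul (continuous_id.inner continuous_const))
    exact (Complex.continuous_exp.comp hc).mul continuous_const

lemma tsum_le_card_mul {ι : Type*} [Countable ι] (f : ι → ℝ≥0∞) (s : Set ι) (hs : s.Finite)
    (c : ℝ≥0∞) (n : ℕ) (hcard : hs.toFinset.card ≤ n) (h0 : ∀ i ∉ s, f i = 0)
    (hle : ∀ i, f i ≤ c) : ∑' i, f i ≤ n * c := by
  rw [tsum_eq_sum (s := hs.toFinset) (fun i hi => h0 i (by simpa using hi))]
  calc ∑ i ∈ hs.toFinset, f i ≤ ∑ _i ∈ hs.toFinset, c := Finset.sum_le_sum fun i _ => hle i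
    _ = (hs.toFinset.card : ℝ≥0∞) * c := by rw [Finset.sum_const, nsmul_eq_mul]
    _ ≤ n * c := mul_le_mul_left (by exact_mod_cast hcard) c

local notation "E'" => EuclideanSpace ℝ (Fin d)

lemma annulus_bound (hd : 0 < d) (G : EuclideanSpace ℝ (Fin d) → ℝ≥0∞)
    (M C β' : ℝ) (hM : 0 ≤ M) (hC : 0 ≤ C) (hb0 : 0 < β')
    (hbd : β' < (d : ℝ))
    (hG1 : ∀ s, G s ≤ ENNReal.ofReal M)
    (hG2 : ∀ s : E', 1 ≤ ‖s‖ → G s ≤ ENNReal.ofReal (C * ‖s‖ ^ (-β'))) :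
    ∃ E₁ : ℝ, 0 ≤ E₁ ∧ ∀ R : ℝ, 1 ≤ R →
      ∫⁻ s in ball (0 : E') R, G s
        ≤ ENNReal.ofReal (E₁ * R ^ ((d : ℝ) - β')) := by
  haveI : Nontrivial (EuclideanSpace ℝ (Fin d)) := euclidean_nontrivial hd
  set v : ℝ≥0∞ := volume (ball (0:E') 1) with hv
  have hvlt : v < ⊤ := measure_ball_lt_top
  set vr : ℝ := v.toReal with hvr
  have hvr0 : 0 ≤ vr := ENNReal.toReal_nonneg
  have hvor : v = ENNReal.ofReal vr := (ENNReal.ofReal_toReal hvlt.ne).symm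
  set q : ℝ := (2:ℝ) ^ ((d:ℝ) - β') with hqdef
  have hq1 : 1 < q :=
    (Real.one_lt_rpow_iff_of_pos (by norm_num)).2 (Or.inl ⟨by norm_num, by linarith⟩)
  set c : ℝ := M * vr + C * 2 ^ d * vr / (q - 1) with hcdef
  have hc0 : 0 ≤ c := by
    apply add_nonneg (mul_nonneg hM hvr0)
    apply div_nonneg _ (by linarith)
    positivity
  have hvor' : volume (ball (0:E') 1) = ENNReal.ofReal vr := by rw [← hv, hvor]
  have hvol : ∀ r : ℝ, 0 ≤ r → volume (ball (0:E') r) = ENNReal.ofReal (r ^ d * vr) := by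
    intro r hr
    rw [Measure.addHaar_ball volume (0:E') hr, finrank_euclideanSpace_fin, hvor',
      ← ENNReal.ofReal_mul (by positivity)]
  have key : ∀ J : ℕ, ∫⁻ s in ball (0:E') ((2:ℝ)^J), G s
      ≤ ENNReal.ofReal (c * ((2:ℝ)^J) ^ ((d:ℝ) - β')) := by
    intro J
    induction J with
    | zero =>
      simp only [pow_zero, Real.one_rpow, mul_one]
      calc ∫⁻ s in ball (0:E') 1, G s ≤ ∫⁻ _s in ball (0:E') 1, ENNReal.ofReal M :=
            setLIntegral_mono' measurableSet_ball (fun s _ => hG1 s)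
        _ = ENNReal.ofReal M * volume (ball (0:E') 1) := setLIntegral_const _ _
        _ = ENNReal.ofReal (M * vr) := by
            rw [← hv, hvor, ← ENNReal.ofReal_mul hM]
        _ ≤ ENNReal.ofReal c := by
            apply ENNReal.ofReal_le_ofReal
            rw [hcdef]
            have : 0 ≤ C * 2 ^ d * vr / (q - 1) := by
              apply div_nonneg _ (by linarith); positivity
            linarith
    | succ J ih =>
      have hy0 : (0:ℝ) < (2:ℝ)^J := by positivity
      have hsub : ball (0:E') ((2:ℝ)^J) ⊆ ball (0:E') ((2:ℝ)^(J+1)) := by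
        apply ball_subset_ball
        rw [pow_succ]; nlinarith
      have hsplit : ball (0:E') ((2:ℝ)^(J+1)) =
          ball (0:E') ((2:ℝ)^J) ∪ (ball (0:E') ((2:ℝ)^(J+1)) \ ball (0:E') ((2:ℝ)^J)) :=
        (Set.union_diff_cancel hsub).symm
      have hshell : ∫⁻ s in ball (0:E') ((2:ℝ)^(J+1)) \ ball (0:E') ((2:ℝ)^J), G s
          ≤ ENNReal.ofReal (C * ((2:ℝ)^J) ^ (-β') * (((2:ℝ)^(J+1)) ^ d * vr)) := by
        have hbd' : ∀ s ∈ ball (0:E') ((2:ℝ)^(J+1)) \ ball (0:E') ((2:ℝ)^J),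
            G s ≤ ENNReal.ofReal (C * ((2:ℝ)^J) ^ (-β')) := by
          rintro s ⟨_, hs2⟩
          have hns : (2:ℝ)^J ≤ ‖s‖ := by
            simp only [mem_ball, dist_zero_right, not_lt] at hs2
            exact hs2
          have h1s : 1 ≤ ‖s‖ := le_trans (one_le_pow₀ (by norm_num)) hns
          refine le_trans (hG2 s h1s) (ENNReal.ofReal_le_ofReal ?_)
          exact mul_le_mul_of_nonneg_left (rpow_neg_anti hy0 hns hb0.le) hC
        calc ∫⁻ s in ball (0:E') ((2:ℝ)^(J+1)) \ ball (0:E') ((2:ℝ)^J), G s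
            ≤ ∫⁻ _s in ball (0:E') ((2:ℝ)^(J+1)) \ ball (0:E') ((2:ℝ)^J),
              ENNReal.ofReal (C * ((2:ℝ)^J) ^ (-β')) :=
            setLIntegral_mono' (measurableSet_ball.diff measurableSet_ball) hbd'
          _ = ENNReal.ofReal (C * ((2:ℝ)^J) ^ (-β')) *
              volume (ball (0:E') ((2:ℝ)^(J+1)) \ ball (0:E') ((2:ℝ)^J)) :=
            setLIntegral_const _ _
          _ ≤ ENNReal.ofReal (C * ((2:ℝ)^J) ^ (-β')) * volume (ball (0:E') ((2:ℝ)^(J+1))) := by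
              gcongr
              exact Set.diff_subset
          _ = _ := by
              rw [hvol _ (by positivity), ← ENNReal.ofReal_mul (by positivity)]
      calc ∫⁻ s in ball (0:E') ((2:ℝ)^(J+1)), G s
          ≤ (∫⁻ s in ball (0:E') ((2:ℝ)^J), G s) +
            ∫⁻ s in ball (0:E') ((2:ℝ)^(J+1)) \ ball (0:E') ((2:ℝ)^J), G s := by
            conv_lhs => rw [hsplit]
            exact lintegral_union_le _ _ _
        _ ≤ ENNReal.ofReal (c * ((2:ℝ)^J) ^ ((d:ℝ) - β')) +
            ENNReal.ofReal (C * ((2:ℝ)^J) ^ (-β') * (((2:ℝ)^(J+1)) ^ d * vr)) :=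
            add_le_add ih hshell
        _ ≤ ENNReal.ofReal (c * ((2:ℝ)^(J+1)) ^ ((d:ℝ) - β')) := by
            rw [← ENNReal.ofReal_add (by positivity) (by positivity)]
            apply ENNReal.ofReal_le_ofReal
            set y : ℝ := (2:ℝ)^J with hy
            have h2y : ((2:ℝ)^(J+1)) = 2 * y := by rw [pow_succ]; ring
            rw [h2y]
            have hu0 : (0:ℝ) < y ^ ((d:ℝ) - β') := Real.rpow_pos_of_pos hy0 _
            have e1 : (2*y) ^ ((d:ℝ) - β') = q * y ^ ((d:ℝ) - β') := by
              rw [Real.mul_rpow (by norm_num) hy0.le]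
            have e2 : (2*y) ^ d = 2^d * y^d := by rw [mul_pow]
            have e3 : y ^ (-β') * (y:ℝ)^d = y ^ ((d:ℝ) - β') := by
              rw [← Real.rpow_natCast y d, ← Real.rpow_add hy0]
              congr 1
              ring
            have hqc : c + C * 2^d * vr ≤ c * q := by
              have ht : C * 2 ^ d * vr / (q - 1) * (q - 1) = C * 2 ^ d * vr :=
                div_mul_cancel₀ _ (by linarith)
              rw [hcdef]
              nlinarith [mul_nonneg (mul_nonneg hM hvr0) (by linarith : (0:ℝ) ≤ q - 1), ht]
            calc c * y ^ ((d:ℝ) - β') + C * y ^ (-β') * ((2*y)^d * vr)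
                = (c + C * 2^d * vr) * y ^ ((d:ℝ) - β') := by
                  rw [e2,
                    show C * y ^ (-β') * (2^d * y^d * vr)
                      = C * 2^d * vr * (y ^ (-β') * y^d) by ring, e3]
                  ring
              _ ≤ (c * q) * y ^ ((d:ℝ) - β') := mul_le_mul_of_nonneg_right hqc hu0.le
              _ = c * ((2*y) ^ ((d:ℝ) - β')) := by rw [e1]; ring
  refine ⟨c * 4 ^ ((d:ℝ) - β'), by positivity, fun R hR => ?_⟩
  set J : ℕ := Nat.clog 2 ⌈R⌉₊ with hJ
  have hRJ : R ≤ (2:ℝ)^J := by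
    have h1 : (⌈R⌉₊ : ℝ) ≤ ((2^J : ℕ) : ℝ) := by
      exact_mod_cast Nat.le_pow_clog (by norm_num) _
    have h2 : R ≤ (⌈R⌉₊ : ℝ) := Nat.le_ceil R
    push_cast at h1
    linarith
  have hJR : (2:ℝ)^J ≤ 4 * R := by
    rcases Nat.eq_zero_or_pos J with h0 | hpos
    · rw [h0]; norm_num; linarith
    · have hceil : 1 < ⌈R⌉₊ := by
        by_contra h
        push_neg at h
        have : Nat.clog 2 ⌈R⌉₊ = 0 := Nat.clog_of_right_le_one h _
        omega
      have hlt : 2 ^ (J - 1) < ⌈R⌉₊ := by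
        have := Nat.pow_pred_clog_lt_self (b := 2) (by norm_num) hceil
        simpa [hJ, Nat.pred_eq_sub_one] using this
      have hlt' : ((2:ℝ)) ^ (J-1) < R + 1 := by
        have h1 : ((2^(J-1) : ℕ) : ℝ) < (⌈R⌉₊ : ℝ) := by exact_mod_cast hlt
        have h2 : (⌈R⌉₊ : ℝ) < R + 1 := Nat.ceil_lt_add_one (by linarith)
        push_cast at h1
        linarith
      have hJeq : J = (J - 1) + 1 := by omega
      rw [hJeq, pow_succ]
      nlinarith
  calc ∫⁻ s in ball (0:E') R, G s ≤ ∫⁻ s in ball (0:E') ((2:ℝ)^J), G s :=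
        lintegral_mono_set (ball_subset_ball hRJ)
    _ ≤ ENNReal.ofReal (c * ((2:ℝ)^J) ^ ((d:ℝ) - β')) := key J
    _ ≤ ENNReal.ofReal (c * 4 ^ ((d:ℝ) - β') * R ^ ((d:ℝ) - β')) := by
        apply ENNReal.ofReal_le_ofReal
        have h4R : ((2:ℝ)^J) ^ ((d:ℝ) - β') ≤ (4*R) ^ ((d:ℝ) - β') :=
          Real.rpow_le_rpow (by positivity) hJR (by linarith)
        have hmul : ((4:ℝ)*R) ^ ((d:ℝ) - β') = 4 ^ ((d:ℝ) - β') * R ^ ((d:ℝ) - β') :=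
          Real.mul_rpow (by norm_num) (by linarith)
        rw [hmul] at h4R
        calc c * ((2:ℝ)^J) ^ ((d:ℝ) - β') ≤ c * (4 ^ ((d:ℝ) - β') * R ^ ((d:ℝ) - β')) :=
              mul_le_mul_of_nonneg_left h4R hc0
          _ = c * 4 ^ ((d:ℝ) - β') * R ^ ((d:ℝ) - β') := by ring

lemma htransl_aux (l : EuclideanSpace ℝ (Fin d)) (W : EuclideanSpace ℝ (Fin d) → ℝ≥0∞)
    (hW : Measurable W) : (∫⁻ t, W (l - t)) = ∫⁻ t, W t := by
  have h1 : (∫⁻ t, W t) = ∫⁻ t, W t ∂(Measure.map (fun t : E' => l - t) volume) := by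
    rw [Measure.map_sub_left_eq_self (volume : Measure E') l]
  rw [h1]
  exact (lintegral_map (g := fun t : E' => l - t) hW (by fun_prop)).symm

end AuxLemmas


set_option maxHeartbeats 4000000 in
/-- Theorem 3.1 (pure type principle): if `μ` satisfies the lower Fourier-energy condition
with exponent `α` and admits a nonzero density `φ` with Fourier decay of order `β/2`,
and `1/α − 1/β > 1/d`, then `L²(μ)` admits no Fourier frame. -/
theorem no_fourier_frame_of_mixed_dimensions {d : ℕ}
    (μ : Measure (EuclideanSpace ℝ (Fin d))) [IsFiniteMeasure μ]
    (α β : ℝ) (hα0 : 0 < α) (hαd : α ≤ (d : ℝ)) (hβ0 : 0 < β) (hβd : β ≤ (d : ℝ))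
    (hlim : 0 < Filter.liminf (fun r : ℝ =>
      r ^ (α - (d : ℝ)) * ∫ t in Metric.ball (0 : EuclideanSpace ℝ (Fin d)) r,
        ‖fourierM μ t‖ ^ 2) Filter.atTop)
    (C : ℝ)
    (hdecay : ∃ φ : EuclideanSpace ℝ (Fin d) → ℂ, MeasureTheory.MemLp φ 2 μ ∧
      (0 < ∫ x, ‖φ x‖ ^ 2 ∂μ) ∧
      ∀ t : EuclideanSpace ℝ (Fin d), t ≠ 0 →
        ‖∫ x, Complex.exp ((((-2) * Real.pi * (inner ℝ t x : ℝ) : ℝ) : ℂ) * Complex.I) * φ x ∂μ‖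
          ≤ C * ‖t‖ ^ (-(β / 2)))
    (hgap : 1 / α - 1 / β > 1 / (d : ℝ)) :
    ¬ HasFourierFrame μ := by
  obtain ⟨φ, hφ2, hΦpos, hφdec⟩ := hdecay
  intro hFF
  obtain ⟨Λ, hΛc, A, B, hA0, hAB, hfr⟩ := hFF
  haveI : Countable ↥Λ := hΛc.to_subtype
  have hd : 0 < d := by
    rcases Nat.eq_zero_or_pos d with h | h
    · subst h; norm_num at hαd; linarith
    · exact h
  haveI hnt : Nontrivial (EuclideanSpace ℝ (Fin d)) := euclidean_nontrivial hd
  have hd1 : 1 ≤ (d:ℝ) := by exact_mod_cast hd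
  have hdinv : 0 < 1/(d:ℝ) := by positivity
  have hαβ : α < β := by
    by_contra h
    push_neg at h
    have h99 : 1/α ≤ 1/β := one_div_le_one_div_of_le hβ0 h
    linarith
  have hαd' : α < (d:ℝ) := by
    by_contra h
    push_neg at h
    have h98 : 1/α ≤ 1/(d:ℝ) := one_div_le_one_div_of_le (by exact_mod_cast hd) h
    have h97 : 0 < 1/β := by positivity
    linarith
  set β' : ℝ := (α + min β (d:ℝ))/2 with hβ'def
  have hmin : α < min β (d:ℝ) := lt_min hαβ hαd'
  have hb'α : α < β' := by rw [hβ'def]; linarith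
  have hb'0 : 0 < β' := lt_trans hα0 hb'α
  have hb'β : β' ≤ β := by
    have h96 := min_le_left β (d:ℝ)
    rw [hβ'def]; linarith
  have hb'd : β' < (d:ℝ) := by
    have h95 := min_le_right β (d:ℝ)
    rw [hβ'def]; linarith
  -- measure basics
  have hμ0 : μ Set.univ ≠ 0 := by
    intro h
    have hz : μ = 0 := Measure.measure_univ_eq_zero.mp h
    rw [hz] at hΦpos
    simp at hΦpos
  set ν : ℝ := (μ Set.univ).toReal with hν
  have hν0 : 0 < ν := ENNReal.toReal_pos hμ0 (measure_ne_top μ _)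
  have hB0 : 0 < B := lt_of_lt_of_le hA0 hAB
  set vr : ℝ := (volume (ball (0:EuclideanSpace ℝ (Fin d)) 1)).toReal with hvr
  have hvr0 : 0 < vr :=
    ENNReal.toReal_pos (measure_ball_pos volume _ one_pos).ne' measure_ball_lt_top.ne
  have hvol : ∀ r : ℝ, 0 ≤ r →
      volume (ball (0:EuclideanSpace ℝ (Fin d)) r) = ENNReal.ofReal (r^d * vr) := by
    intro r hr
    rw [Measure.addHaar_ball volume _ hr, finrank_euclideanSpace_fin,
      show volume (ball (0:EuclideanSpace ℝ (Fin d)) 1) = ENNReal.ofReal vr from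
        (ENNReal.ofReal_toReal measure_ball_lt_top.ne).symm,
      ← ENNReal.ofReal_mul (by positivity)]
  -- φ basics
  have hφint : Integrable φ μ := hφ2.integrable one_le_two
  set Mφ : ℝ := ∫ x, ‖φ x‖ ∂μ with hMφ
  have hMφ0 : 0 ≤ Mφ := integral_nonneg fun x => norm_nonneg _
  set g : EuclideanSpace ℝ (Fin d) → ℂ := fun s =>
    ∫ x, Complex.exp ((((-2) * Real.pi * (inner ℝ s x : ℝ) : ℝ) : ℂ) * Complex.I) * φ x ∂μ
    with hgdef
  have hgnorm : ∀ s, ‖g s‖ ≤ Mφ := by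
    intro s
    refine le_trans (norm_integral_le_integral_norm _) (le_of_eq ?_)
    apply integral_congr_ae
    filter_upwards with x
    rw [norm_mul, norm_exp_aux, one_mul]
  have hgcont : Continuous g := cont_transform μ φ hφint
  have hC0 : 0 ≤ C := by
    set t₀ : EuclideanSpace ℝ (Fin d) := EuclideanSpace.single ⟨0, hd⟩ (1:ℝ) with ht₀def
    have ht₀ : ‖t₀‖ = 1 := by
      rw [ht₀def, EuclideanSpace.norm_single]
      norm_num
    have hne : t₀ ≠ 0 := by
      intro h
      rw [h] at ht₀
      simp at ht₀
    have h94 := hφdec t₀ hne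
    rw [ht₀, Real.one_rpow, mul_one] at h94
    exact le_trans (norm_nonneg _) h94
  have hgdecay : ∀ s : EuclideanSpace ℝ (Fin d), 1 ≤ ‖s‖ → ‖g s‖^2 ≤ C^2 * ‖s‖ ^ (-β') := by
    intro s hs
    have hs0 : s ≠ 0 := by
      intro h
      rw [h, norm_zero] at hs
      linarith
    have h1 := hφdec s hs0
    have h2 : ‖g s‖^2 ≤ (C * ‖s‖ ^ (-(β/2)))^2 := by
      apply pow_le_pow_left₀ (norm_nonneg _) h1
    have h3 : (C * ‖s‖ ^ (-(β/2)))^2 = C^2 * (‖s‖ ^ (-(β/2)))^2 := by ring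
    have h4 : (‖s‖ ^ (-(β/2)))^2 = ‖s‖ ^ (-β) := by
      rw [← Real.rpow_natCast (‖s‖ ^ (-(β/2))) 2, ← Real.rpow_mul (norm_nonneg s)]
      norm_num
    have h5 : ‖s‖ ^ (-β) ≤ ‖s‖ ^ (-β') :=
      Real.rpow_le_rpow_of_exponent_le hs (by linarith)
    calc ‖g s‖^2 ≤ C^2 * ‖s‖ ^ (-β) := by rw [h3, h4] at h2; exact h2
      _ ≤ C^2 * ‖s‖ ^ (-β') := by nlinarith [sq_nonneg C]
  have hfcont : Continuous (fourierM μ) := by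
    have h := cont_transform μ (fun _ => (1:ℂ)) (integrable_const 1)
    simp only [mul_one] at h
    exact h
  have hfnorm : ∀ t, ‖fourierM μ t‖ ≤ ν := by
    intro t
    refine le_trans (norm_integral_le_integral_norm _) (le_of_eq ?_)
    have h93 : ∀ x : EuclideanSpace ℝ (Fin d),
        ‖Complex.exp ((((-2) * Real.pi * (inner ℝ t x : ℝ) : ℝ) : ℂ) * Complex.I)‖ = 1 :=
      fun x => norm_exp_aux _
    rw [integral_congr_ae (Filter.Eventually.of_forall h93), integral_const, smul_eq_mul, mul_one, measureReal_def]

  -- lintegral-side functions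
  set F : EuclideanSpace ℝ (Fin d) → ℝ≥0∞ := fun t => ENNReal.ofReal (‖fourierM μ t‖^2)
    with hFdef
  have hFmeas : Measurable F :=
    (ENNReal.continuous_ofReal.comp ((hfcont.norm).pow 2)).measurable
  set Gg : EuclideanSpace ℝ (Fin d) → ℝ≥0∞ := fun s => ENNReal.ofReal (‖g s‖^2) with hGgdef
  have hGgmeas : Measurable Gg :=
    (ENNReal.continuous_ofReal.comp ((hgcont.norm).pow 2)).measurable
  have hGg1 : ∀ s, Gg s ≤ ENNReal.ofReal (Mφ^2) := by
    intro s
    apply ENNReal.ofReal_le_ofReal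
    nlinarith [hgnorm s, norm_nonneg (g s)]
  have hGg2 : ∀ s : EuclideanSpace ℝ (Fin d), 1 ≤ ‖s‖ →
      Gg s ≤ ENNReal.ofReal (C^2 * ‖s‖ ^ (-β')) :=
    fun s hs => ENNReal.ofReal_le_ofReal (hgdecay s hs)
  -- frame identities
  have hterm1 : ∀ (t : EuclideanSpace ℝ (Fin d)) (l : ↥Λ),
      (∫ x, fexp t x * (starRingEnd ℂ) (fexp (l : EuclideanSpace ℝ (Fin d)) x) ∂μ)
        = fourierM μ ((l : EuclideanSpace ℝ (Fin d)) - t) := by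
    intro t l
    exact integral_congr_ae (Filter.Eventually.of_forall fun x => fexp_mul_conj t _ x)
  have hterm2 : ∀ (t : EuclideanSpace ℝ (Fin d)) (l : ↥Λ),
      (∫ x, (fexp t x * φ x) * (starRingEnd ℂ) (fexp (l : EuclideanSpace ℝ (Fin d)) x) ∂μ)
        = g ((l : EuclideanSpace ℝ (Fin d)) - t) := by
    intro t l
    rw [hgdef]
    apply integral_congr_ae
    filter_upwards with x
    rw [show (fexp t x * φ x) * (starRingEnd ℂ) (fexp (l : EuclideanSpace ℝ (Fin d)) x)
        = (fexp t x * (starRingEnd ℂ) (fexp (l : EuclideanSpace ℝ (Fin d)) x)) * φ x by ring,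
      fexp_mul_conj t _ x]
  have hfexpcont : ∀ t : EuclideanSpace ℝ (Fin d), Continuous (fexp t) := by
    intro t
    refine Complex.continuous_exp.comp ?_
    refine (Complex.continuous_ofReal.comp ?_).mul continuous_const
    exact continuous_const.mul (continuous_const.inner continuous_id)
  have hfexpnorm : ∀ (t x : EuclideanSpace ℝ (Fin d)), ‖fexp t x‖ = 1 := by
    intro t x
    exact norm_exp_aux _
  have hmem1 : ∀ t : EuclideanSpace ℝ (Fin d), MemLp (fexp t) 2 μ := by
    intro t
    exact MemLp.of_bound (hfexpcont t).aestronglyMeasurable 1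
      (Filter.Eventually.of_forall fun x => le_of_eq (hfexpnorm t x))
  have hnorm1 : ∀ t : EuclideanSpace ℝ (Fin d), (∫ x, ‖fexp t x‖^2 ∂μ) = ν := by
    intro t
    have h92 : ∀ x : EuclideanSpace ℝ (Fin d), ‖fexp t x‖^2 = 1 := by
      intro x
      rw [hfexpnorm t x]; norm_num
    rw [integral_congr_ae (Filter.Eventually.of_forall h92), integral_const, smul_eq_mul, mul_one, measureReal_def]
  have frame1 : ∀ t : EuclideanSpace ℝ (Fin d),
      A * ν ≤ (∑' l : ↥Λ, ‖fourierM μ ((l : EuclideanSpace ℝ (Fin d)) - t)‖^2) ∧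
      (∑' l : ↥Λ, ‖fourierM μ ((l : EuclideanSpace ℝ (Fin d)) - t)‖^2) ≤ B * ν := by
    intro t
    have h := hfr (fexp t) (hmem1 t)
    rw [hnorm1 t] at h
    have hts : (∑' l : ↥Λ, ‖∫ x, fexp t x *
        (starRingEnd ℂ) (fexp (l : EuclideanSpace ℝ (Fin d)) x) ∂μ‖^2)
        = ∑' l : ↥Λ, ‖fourierM μ ((l : EuclideanSpace ℝ (Fin d)) - t)‖^2 :=
      tsum_congr fun l => by rw [hterm1 t l]
    rwa [hts] at h
  set Φ : ℝ := ∫ x, ‖φ x‖^2 ∂μ with hΦ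
  have hmem2 : ∀ t : EuclideanSpace ℝ (Fin d), MemLp (fun x => fexp t x * φ x) 2 μ := by
    intro t
    refine MemLp.of_le hφ2 ((hfexpcont t).aestronglyMeasurable.mul hφ2.1) ?_
    filter_upwards with x
    rw [norm_mul, hfexpnorm t x, one_mul]
  have hnorm2 : ∀ t : EuclideanSpace ℝ (Fin d), (∫ x, ‖fexp t x * φ x‖^2 ∂μ) = Φ := by
    intro t
    rw [hΦ]
    apply integral_congr_ae
    filter_upwards with x
    rw [norm_mul, hfexpnorm t x, one_mul]
  have frame2 : ∀ t : EuclideanSpace ℝ (Fin d),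
      A * Φ ≤ (∑' l : ↥Λ, ‖g ((l : EuclideanSpace ℝ (Fin d)) - t)‖^2) ∧
      (∑' l : ↥Λ, ‖g ((l : EuclideanSpace ℝ (Fin d)) - t)‖^2) ≤ B * Φ := by
    intro t
    have h := hfr (fun x => fexp t x * φ x) (hmem2 t)
    rw [hnorm2 t] at h
    have hts : (∑' l : ↥Λ, ‖∫ x, (fexp t x * φ x) *
        (starRingEnd ℂ) (fexp (l : EuclideanSpace ℝ (Fin d)) x) ∂μ‖^2)
        = ∑' l : ↥Λ, ‖g ((l : EuclideanSpace ℝ (Fin d)) - t)‖^2 :=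
      tsum_congr fun l => by rw [hterm2 t l]
    rwa [hts] at h
  have hsum1 : ∀ t : EuclideanSpace ℝ (Fin d),
      Summable (fun l : ↥Λ => ‖fourierM μ ((l : EuclideanSpace ℝ (Fin d)) - t)‖^2) := by
    intro t
    by_contra hs
    have h := (frame1 t).1
    rw [tsum_eq_zero_of_not_summable hs] at h
    nlinarith
  have hsum2 : ∀ t : EuclideanSpace ℝ (Fin d),
      Summable (fun l : ↥Λ => ‖g ((l : EuclideanSpace ℝ (Fin d)) - t)‖^2) := by
    intro t
    by_contra hs
    have h := (frame2 t).1
    rw [tsum_eq_zero_of_not_summable hs] at h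
    nlinarith
  -- energy estimate from the liminf hypothesis
  have energy : ∃ c₀ : ℝ, 0 < c₀ ∧ ∃ r₀ : ℝ, 1 ≤ r₀ ∧ ∀ r, r₀ ≤ r →
      ENNReal.ofReal (c₀ * r ^ ((d:ℝ) - α)) ≤
        ∫⁻ t in ball (0 : EuclideanSpace ℝ (Fin d)) r, F t := by
    set L := Filter.liminf (fun r : ℝ =>
      r ^ (α - (d : ℝ)) * ∫ t in ball (0 : EuclideanSpace ℝ (Fin d)) r,
        ‖fourierM μ t‖ ^ 2) Filter.atTop with hL
    have hbdd : Filter.IsBoundedUnder (· ≥ ·) Filter.atTop (fun r : ℝ =>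
        r ^ (α - (d : ℝ)) * ∫ t in ball (0 : EuclideanSpace ℝ (Fin d)) r,
          ‖fourierM μ t‖ ^ 2) := by
      refine ⟨0, ?_⟩
      rw [Filter.eventually_map]
      filter_upwards [Filter.eventually_ge_atTop (1:ℝ)] with r hr
      have h1 : (0:ℝ) ≤ r ^ (α - (d:ℝ)) := Real.rpow_nonneg (by linarith) _
      have h2 : (0:ℝ) ≤ ∫ t in ball (0 : EuclideanSpace ℝ (Fin d)) r, ‖fourierM μ t‖ ^ 2 :=
        integral_nonneg fun t => by positivity
      positivity
    have hev := Filter.eventually_lt_of_lt_liminf (show L/2 < L from half_lt_self hlim) hbdd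
    rw [Filter.eventually_atTop] at hev
    obtain ⟨r₁, hr₁⟩ := hev
    refine ⟨L/2, half_pos hlim, max r₁ 1, le_max_right _ _, fun r hr => ?_⟩
    have hr1 : 1 ≤ r := le_trans (le_max_right _ _) hr
    have hr0 : 0 < r := by linarith
    have h := hr₁ r (le_trans (le_max_left _ _) hr)
    set I : ℝ := ∫ t in ball (0 : EuclideanSpace ℝ (Fin d)) r, ‖fourierM μ t‖ ^ 2 with hI
    have hrpow : r ^ (α - (d:ℝ)) * r ^ ((d:ℝ) - α) = 1 := by
      rw [← Real.rpow_add hr0]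
      norm_num
    have hineq : L/2 * r ^ ((d:ℝ) - α) ≤ I := by
      have hp : 0 < r ^ ((d:ℝ) - α) := Real.rpow_pos_of_pos hr0 _
      have h2 : (L/2) * r ^ ((d:ℝ) - α) < (r ^ (α - (d:ℝ)) * I) * r ^ ((d:ℝ) - α) := by
        exact mul_lt_mul_of_pos_right h hp
      have h3 : (r ^ (α - (d:ℝ)) * I) * r ^ ((d:ℝ) - α) = I := by
        rw [show (r ^ (α - (d:ℝ)) * I) * r ^ ((d:ℝ) - α)
          = (r ^ (α - (d:ℝ)) * r ^ ((d:ℝ) - α)) * I by ring, hrpow, one_mul]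
      linarith
    have hint : IntegrableOn (fun t => ‖fourierM μ t‖ ^ 2)
        (ball (0 : EuclideanSpace ℝ (Fin d)) r) volume := by
      refine Integrable.mono' (g := fun _ => ν^2)
        (integrableOn_const measure_ball_lt_top.ne)
        ((hfcont.norm.pow 2).aestronglyMeasurable) ?_
      filter_upwards with t
      rw [Real.norm_of_nonneg (by positivity)]
      nlinarith [hfnorm t, norm_nonneg (fourierM μ t)]
    have heq : ENNReal.ofReal I = ∫⁻ t in ball (0 : EuclideanSpace ℝ (Fin d)) r, F t := by
      rw [hI]
      rw [MeasureTheory.ofReal_integral_eq_lintegral_ofReal hint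
        (Filter.Eventually.of_forall fun t => by positivity)]
    rw [← heq]
    exact ENNReal.ofReal_le_ofReal hineq
  obtain ⟨c₀, hc₀0, r₀, hr₀1, henergy⟩ := energy

  -- lower bound for translated ball integrals
  have hcount0 : ∀ S : ℝ, r₀ ≤ S → ∀ l : EuclideanSpace ℝ (Fin d), ‖l‖ < S →
      ENNReal.ofReal (c₀ * S ^ ((d:ℝ) - α)) ≤
        ∫⁻ t in ball (0 : EuclideanSpace ℝ (Fin d)) (2*S), F (l - t) := by
    intro S hS l hl
    have hS1 : 1 ≤ S := le_trans hr₀1 hS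
    set W : EuclideanSpace ℝ (Fin d) → ℝ≥0∞ :=
      (ball (0 : EuclideanSpace ℝ (Fin d)) S).indicator F with hW
    have hWm : Measurable W := hFmeas.indicator measurableSet_ball
    have step1 : ENNReal.ofReal (c₀ * S ^ ((d:ℝ) - α)) ≤
        ∫⁻ t in ball (0 : EuclideanSpace ℝ (Fin d)) S, F t := henergy S hS
    have step2 : (∫⁻ t in ball (0 : EuclideanSpace ℝ (Fin d)) S, F t) = ∫⁻ t, W t := by
      rw [hW, lintegral_indicator measurableSet_ball]
    have step3 : (∫⁻ t, W t) = ∫⁻ t, W (l - t) := (htransl_aux l W hWm).symm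
    have step4 : (∫⁻ t, W (l - t)) =
        ∫⁻ t in ball (0 : EuclideanSpace ℝ (Fin d)) (2*S), W (l - t) := by
      have hcong : ∀ t : EuclideanSpace ℝ (Fin d),
          W (l - t) = (ball (0 : EuclideanSpace ℝ (Fin d)) (2*S)).indicator
            (fun t' => W (l - t')) t := by
        intro t
        by_cases ht : t ∈ ball (0 : EuclideanSpace ℝ (Fin d)) (2*S)
        · rw [Set.indicator_of_mem ht]
        · rw [Set.indicator_of_notMem ht]
          rw [hW]
          apply Set.indicator_of_notMem
          simp only [mem_ball, dist_zero_right, not_lt] at ht ⊢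
          have h1 : ‖t‖ - ‖l‖ ≤ ‖l - t‖ := by
            have := norm_sub_norm_le t l
            rw [show ‖t - l‖ = ‖l - t‖ from norm_sub_rev t l] at this
            linarith
          linarith
      rw [lintegral_congr hcong, lintegral_indicator measurableSet_ball]
    have step5 : (∫⁻ t in ball (0 : EuclideanSpace ℝ (Fin d)) (2*S), W (l - t)) ≤
        ∫⁻ t in ball (0 : EuclideanSpace ℝ (Fin d)) (2*S), F (l - t) := by
      apply lintegral_mono
      intro t
      rw [hW]
      exact Set.indicator_le_self _ _ _
    calc ENNReal.ofReal (c₀ * S ^ ((d:ℝ) - α)) ≤ _ := step1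
      _ = _ := step2
      _ = _ := step3
      _ = _ := step4
      _ ≤ _ := step5
  -- finite-subset counting bound
  set K : ℝ := B * ν * 2^d * vr / c₀ with hK
  have hK0 : 0 ≤ K := by
    apply div_nonneg _ hc₀0.le
    have := hB0.le
    positivity
  have hKcard : ∀ S : ℝ, r₀ ≤ S → ∀ Fs : Finset ↥Λ,
      (∀ l ∈ Fs, ‖(l : EuclideanSpace ℝ (Fin d))‖ < S) → (Fs.card : ℝ) ≤ K * S ^ α := by
    intro S hS Fs hFs
    have hS1 : 1 ≤ S := le_trans hr₀1 hS
    have hS0 : 0 < S := by linarith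
    -- ENNReal chain
    have hEN : (Fs.card : ℝ≥0∞) * ENNReal.ofReal (c₀ * S ^ ((d:ℝ) - α)) ≤
        ENNReal.ofReal (B * ν) * volume (ball (0 : EuclideanSpace ℝ (Fin d)) (2*S)) := by
      have hsum : ∀ t : EuclideanSpace ℝ (Fin d),
          (∑ l ∈ Fs, F ((l : EuclideanSpace ℝ (Fin d)) - t)) ≤ ENNReal.ofReal (B * ν) := by
        intro t
        rw [hFdef]
        rw [← ENNReal.ofReal_sum_of_nonneg (fun l _ => by positivity)]
        apply ENNReal.ofReal_le_ofReal
        refine le_trans ((hsum1 t).sum_le_tsum Fs (fun l _ => by positivity)) (frame1 t).2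
      calc (Fs.card : ℝ≥0∞) * ENNReal.ofReal (c₀ * S ^ ((d:ℝ) - α))
          = ∑ _l ∈ Fs, ENNReal.ofReal (c₀ * S ^ ((d:ℝ) - α)) := by
            rw [Finset.sum_const, nsmul_eq_mul]
        _ ≤ ∑ l ∈ Fs, ∫⁻ t in ball (0 : EuclideanSpace ℝ (Fin d)) (2*S),
              F ((l : EuclideanSpace ℝ (Fin d)) - t) :=
            Finset.sum_le_sum fun l hl => hcount0 S hS _ (hFs l hl)
        _ = ∫⁻ t in ball (0 : EuclideanSpace ℝ (Fin d)) (2*S),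
              ∑ l ∈ Fs, F ((l : EuclideanSpace ℝ (Fin d)) - t) := by
            rw [lintegral_finset_sum']
            intro l _
            exact (hFmeas.comp (measurable_const.sub measurable_id)).aemeasurable
        _ ≤ ∫⁻ _t in ball (0 : EuclideanSpace ℝ (Fin d)) (2*S), ENNReal.ofReal (B * ν) :=
            setLIntegral_mono' measurableSet_ball (fun t _ => hsum t)
        _ = ENNReal.ofReal (B * ν) * volume (ball (0 : EuclideanSpace ℝ (Fin d)) (2*S)) :=
            setLIntegral_const _ _
    rw [hvol (2*S) (by linarith), ← ENNReal.ofReal_mul (by positivity),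
      show (Fs.card : ℝ≥0∞) = ENNReal.ofReal (Fs.card : ℝ) by
        rw [ENNReal.ofReal_natCast],
      ← ENNReal.ofReal_mul (by positivity)] at hEN
    have hreal : (Fs.card : ℝ) * (c₀ * S ^ ((d:ℝ) - α)) ≤ B * ν * ((2*S)^d * vr) :=
      (ENNReal.ofReal_le_ofReal_iff (by positivity)).mp hEN
    -- algebra
    have e1 : ((2*S)^d : ℝ) = 2^d * S^d := mul_pow 2 S d
    have e2 : (S:ℝ)^d = S ^ ((d:ℝ) - α) * S ^ α := by
      rw [← Real.rpow_natCast S d, ← Real.rpow_add hS0]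
      congr 1
      ring
    have hT0 : (0:ℝ) < S ^ ((d:ℝ) - α) := Real.rpow_pos_of_pos hS0 _
    rw [hK]
    rw [div_mul_eq_mul_div, le_div_iff₀ hc₀0]
    have h2 : ((Fs.card : ℝ) * c₀) * S ^ ((d:ℝ) - α) ≤
        (B * ν * 2^d * vr * S ^ α) * S ^ ((d:ℝ) - α) := by
      calc ((Fs.card : ℝ) * c₀) * S ^ ((d:ℝ) - α)
          = (Fs.card : ℝ) * (c₀ * S ^ ((d:ℝ) - α)) := by ring
        _ ≤ B * ν * ((2*S)^d * vr) := hreal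
        _ = (B * ν * 2^d * vr * S ^ α) * S ^ ((d:ℝ) - α) := by
            rw [e1, e2]; ring
    exact le_of_mul_le_mul_right h2 hT0
  -- tsum counting bound
  have hNsum : ∀ S : ℝ, r₀ ≤ S → ∀ (u : ↥Λ → ℝ≥0∞) (cst : ℝ≥0∞),
      (∀ l, u l ≤ cst) → (∀ l : ↥Λ, ¬ (‖(l : EuclideanSpace ℝ (Fin d))‖ < S) → u l = 0) →
      ∑' l, u l ≤ ENNReal.ofReal (K * S ^ α) * cst := by
    intro S hS u cst hle h0
    have hS1 : 1 ≤ S := le_trans hr₀1 hS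
    have hS0 : 0 < S := by linarith
    have hKS0 : 0 ≤ K * S ^ α := by positivity
    set s : Set ↥Λ := {l : ↥Λ | ‖(l : EuclideanSpace ℝ (Fin d))‖ < S} with hs
    have hfin : s.Finite := by
      by_contra hinf
      have hinf' : s.Infinite := hinf
      obtain ⟨Fs, hFs, hFscard⟩ := hinf'.exists_subset_card_eq (⌊K * S ^ α⌋₊ + 1)
      have h1 : (Fs.card : ℝ) ≤ K * S ^ α := by
        apply hKcard S hS
        intro l hl
        exact hFs hl
      rw [hFscard] at h1
      have h2 : K * S ^ α < (⌊K * S ^ α⌋₊ + 1 : ℕ) := by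
        push_cast
        exact Nat.lt_floor_add_one _
      linarith
    have hcard : hfin.toFinset.card ≤ ⌊K * S ^ α⌋₊ := by
      apply Nat.le_floor
      apply hKcard S hS
      intro l hl
      rw [Set.Finite.mem_toFinset] at hl
      exact hl
    calc ∑' l, u l ≤ (⌊K * S ^ α⌋₊ : ℝ≥0∞) * cst :=
          tsum_le_card_mul u s hfin cst _ hcard h0 hle
      _ ≤ ENNReal.ofReal (K * S ^ α) * cst := by
          apply mul_le_mul_left
          rw [← ENNReal.ofReal_natCast]
          exact ENNReal.ofReal_le_ofReal (Nat.floor_le hKS0)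

  -- annulus bound for Gg
  obtain ⟨E₁, hE₁0, hann⟩ := annulus_bound hd Gg (Mφ^2) (C^2) β'
    (by positivity) (by positivity) hb'0 hb'd hGg1 hGg2
  -- pointwise lower bound
  have hlow : ∀ t : EuclideanSpace ℝ (Fin d),
      ENNReal.ofReal (A * Φ) ≤ ∑' l : ↥Λ, Gg ((l : EuclideanSpace ℝ (Fin d)) - t) := by
    intro t
    have h1 := (frame2 t).1
    calc ENNReal.ofReal (A * Φ)
        ≤ ENNReal.ofReal (∑' l : ↥Λ, ‖g ((l : EuclideanSpace ℝ (Fin d)) - t)‖^2) :=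
          ENNReal.ofReal_le_ofReal h1
      _ = ∑' l : ↥Λ, Gg ((l : EuclideanSpace ℝ (Fin d)) - t) := by
          rw [hGgdef]
          exact ENNReal.ofReal_tsum_of_nonneg (fun l => by positivity) (hsum2 t)
  -- geometric series setup
  set ρ : ℝ := (2:ℝ) ^ (α - β') with hρ
  have hρ0 : 0 ≤ ρ := Real.rpow_nonneg (by norm_num) _
  have hρ1 : ρ < 1 := by
    rw [hρ]
    exact Real.rpow_lt_one_of_one_lt_of_neg (by norm_num) (by linarith)
  set Gρ : ℝ≥0∞ := (1 - ENNReal.ofReal ρ)⁻¹ with hGρ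
  have hGρtop : Gρ ≠ ⊤ := by
    rw [hGρ, ENNReal.inv_ne_top]
    intro h
    rw [tsub_eq_zero_iff_le] at h
    have h50 := lt_of_lt_of_le (ENNReal.ofReal_lt_one.mpr hρ1) h
    simp at h50
  set GρR : ℝ := Gρ.toReal with hGρR
  have hGρReq : Gρ = ENNReal.ofReal GρR := (ENNReal.ofReal_toReal hGρtop).symm
  have hGρR0 : 0 ≤ GρR := ENNReal.toReal_nonneg
  set P : ℝ := K * 3^α * (E₁ * 3^((d:ℝ)-β')) + K * 4^α * (C^2 * vr) * GρR with hP
  -- the central estimate for every R ≥ r₀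
  have main : ∀ R : ℝ, r₀ ≤ R → A * Φ * vr ≤ P * R ^ (α - β') := by
    intro R hRr₀
    have hR1 : 1 ≤ R := le_trans hr₀1 hRr₀
    have hR0 : 0 < R := by linarith
    set u : ↥Λ → ℝ≥0∞ := fun l =>
      ∫⁻ t in ball (0 : EuclideanSpace ℝ (Fin d)) R, Gg ((l : EuclideanSpace ℝ (Fin d)) - t)
      with hu
    have hLHS : ENNReal.ofReal (A * Φ) * volume (ball (0 : EuclideanSpace ℝ (Fin d)) R)
        ≤ ∑' l, u l := by
      calc ENNReal.ofReal (A * Φ) * volume (ball (0 : EuclideanSpace ℝ (Fin d)) R)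
          = ∫⁻ _t in ball (0 : EuclideanSpace ℝ (Fin d)) R, ENNReal.ofReal (A * Φ) :=
            (setLIntegral_const _ _).symm
        _ ≤ ∫⁻ t in ball (0 : EuclideanSpace ℝ (Fin d)) R,
              ∑' l : ↥Λ, Gg ((l : EuclideanSpace ℝ (Fin d)) - t) :=
            setLIntegral_mono' measurableSet_ball (fun t _ => hlow t)
        _ = ∑' l, u l := by
            rw [hu]
            exact lintegral_tsum fun l =>
              (hGgmeas.comp (measurable_const.sub measurable_id)).aemeasurable
    set nearf : ↥Λ → ℝ≥0∞ := fun l =>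
      if ‖(l : EuclideanSpace ℝ (Fin d))‖ ≤ 2*R then u l else 0 with hnearf
    set farf : ↥Λ → ℝ≥0∞ := fun l =>
      if ‖(l : EuclideanSpace ℝ (Fin d))‖ ≤ 2*R then 0 else u l with hfarf
    have hufsplit : ∑' l, u l = (∑' l, nearf l) + ∑' l, farf l := by
      rw [← ENNReal.tsum_add]
      apply tsum_congr
      intro l
      by_cases h : ‖(l : EuclideanSpace ℝ (Fin d))‖ ≤ 2*R <;> simp [hnearf, hfarf, h]
    -- near field
    have hIndNear : ∀ l : EuclideanSpace ℝ (Fin d), ‖l‖ ≤ 2*R →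
        (∫⁻ t in ball (0 : EuclideanSpace ℝ (Fin d)) R, Gg (l - t)) ≤
          ∫⁻ s in ball (0 : EuclideanSpace ℝ (Fin d)) (3*R), Gg s := by
      intro l hl
      set W : EuclideanSpace ℝ (Fin d) → ℝ≥0∞ :=
        (ball (0 : EuclideanSpace ℝ (Fin d)) (3*R)).indicator Gg with hW
      have hWm : Measurable W := hGgmeas.indicator measurableSet_ball
      have hcong : (∫⁻ t in ball (0 : EuclideanSpace ℝ (Fin d)) R, Gg (l - t))
          = ∫⁻ t in ball (0 : EuclideanSpace ℝ (Fin d)) R, W (l - t) := by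
        apply setLIntegral_congr_fun measurableSet_ball
        intro t htm
        have hmem : l - t ∈ ball (0 : EuclideanSpace ℝ (Fin d)) (3*R) := by
          simp only [mem_ball, dist_zero_right] at htm ⊢
          calc ‖l - t‖ ≤ ‖l‖ + ‖t‖ := norm_sub_le l t
            _ < 2*R + R := add_lt_add_of_le_of_lt hl htm
            _ = 3*R := by ring
        exact (Set.indicator_of_mem hmem Gg).symm
      rw [hcong]
      calc (∫⁻ t in ball (0 : EuclideanSpace ℝ (Fin d)) R, W (l - t))
          ≤ ∫⁻ t, W (l - t) := setLIntegral_le_lintegral _ _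
        _ = ∫⁻ t, W t := htransl_aux l W hWm
        _ = ∫⁻ s in ball (0 : EuclideanSpace ℝ (Fin d)) (3*R), Gg s := by
            rw [hW, lintegral_indicator measurableSet_ball]
    have hnear : (∑' l, nearf l) ≤
        ENNReal.ofReal (K * (3*R) ^ α) * ENNReal.ofReal (E₁ * (3*R) ^ ((d:ℝ) - β')) := by
      apply hNsum (3*R) (by linarith)
      · intro l
        rw [hnearf]
        by_cases h : ‖(l : EuclideanSpace ℝ (Fin d))‖ ≤ 2*R
        · simp only [if_pos h]
          rw [hu]
          exact le_trans (hIndNear _ h) (hann (3*R) (by linarith))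
        · simp only [if_neg h]
          exact zero_le
      · intro l hl
        rw [hnearf]
        apply if_neg
        intro h
        push_neg at hl
        linarith
    -- far field
    have hFarl : ∀ l : EuclideanSpace ℝ (Fin d), 2*R < ‖l‖ →
        (∫⁻ t in ball (0 : EuclideanSpace ℝ (Fin d)) R, Gg (l - t)) ≤
          ENNReal.ofReal ((C^2 * (‖l‖/2) ^ (-β')) * (R^d * vr)) := by
      intro l hl
      have hpt : ∀ t ∈ ball (0 : EuclideanSpace ℝ (Fin d)) R,
          Gg (l - t) ≤ ENNReal.ofReal (C^2 * (‖l‖/2) ^ (-β')) := by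
        intro t ht
        simp only [mem_ball, dist_zero_right] at ht
        have h1 : ‖l‖/2 ≤ ‖l - t‖ := by
          have h2 : ‖l‖ - ‖t‖ ≤ ‖l - t‖ := norm_sub_norm_le l t
          linarith
        have h2 : (1:ℝ) ≤ ‖l‖/2 := by linarith
        have h3 : 1 ≤ ‖l - t‖ := le_trans h2 h1
        refine le_trans (hGg2 _ h3) (ENNReal.ofReal_le_ofReal ?_)
        exact mul_le_mul_of_nonneg_left (rpow_neg_anti (by linarith) h1 hb'0.le) (by positivity)
      calc (∫⁻ t in ball (0 : EuclideanSpace ℝ (Fin d)) R, Gg (l - t))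
          ≤ ∫⁻ _t in ball (0 : EuclideanSpace ℝ (Fin d)) R,
              ENNReal.ofReal (C^2 * (‖l‖/2) ^ (-β')) :=
            setLIntegral_mono' measurableSet_ball hpt
        _ = ENNReal.ofReal (C^2 * (‖l‖/2) ^ (-β')) *
              volume (ball (0 : EuclideanSpace ℝ (Fin d)) R) := setLIntegral_const _ _
        _ = ENNReal.ofReal ((C^2 * (‖l‖/2) ^ (-β')) * (R^d * vr)) := by
            rw [hvol R hR0.le, ← ENNReal.ofReal_mul (by positivity)]
    set wk : ℕ → ↥Λ → ℝ≥0∞ := fun k l =>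
      if ((2:ℝ)^(k+1)*R ≤ ‖(l : EuclideanSpace ℝ (Fin d))‖ ∧
          ‖(l : EuclideanSpace ℝ (Fin d))‖ < (2:ℝ)^(k+2)*R)
      then ENNReal.ofReal ((C^2 * ((2:ℝ)^k*R) ^ (-β')) * (R^d * vr)) else 0 with hwk
    have hfark : ∀ l : ↥Λ, farf l ≤ ∑' k : ℕ, wk k l := by
      intro l
      rw [hfarf]
      by_cases h : ‖(l : EuclideanSpace ℝ (Fin d))‖ ≤ 2*R
      · simp only [if_pos h]
        exact zero_le
      · simp only [if_neg h]
        push_neg at h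
        set x : ℝ := ‖(l : EuclideanSpace ℝ (Fin d))‖ / R with hx
        have hx2 : 2 < x := by
          rw [hx, lt_div_iff₀ hR0]
          linarith
        have hx0 : 0 ≤ x := by positivity
        set n : ℕ := ⌊x⌋₊ with hn
        have hn2 : 2 ≤ n := Nat.le_floor (by exact_mod_cast hx2.le)
        set m : ℕ := Nat.log 2 n with hm
        have hm1 : 1 ≤ m := Nat.log_pos (by norm_num) hn2
        set k : ℕ := m - 1 with hk
        have hk1m : k + 1 = m := by omega
        have hk2m : k + 2 = m + 1 := by omega
        have h2m : (2:ℕ)^m ≤ n := Nat.pow_log_le_self 2 (by omega)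
        have h2m' : n < 2^(m+1) := Nat.lt_pow_succ_log_self (by norm_num) n
        have hxlow : (2:ℝ)^(k+1) ≤ x := by
          rw [hk1m]
          calc ((2:ℝ))^m = ((2^m : ℕ) : ℝ) := by push_cast; ring
            _ ≤ (n:ℝ) := by exact_mod_cast h2m
            _ ≤ x := Nat.floor_le hx0
        have hxhi : x < (2:ℝ)^(k+2) := by
          rw [hk2m]
          calc x < (n:ℝ) + 1 := Nat.lt_floor_add_one x
            _ ≤ ((2^(m+1) : ℕ) : ℝ) := by exact_mod_cast h2m'
            _ = (2:ℝ)^(m+1) := by push_cast; ring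
        have hlx : ‖(l : EuclideanSpace ℝ (Fin d))‖ = x * R := by
          rw [hx, div_mul_cancel₀ _ hR0.ne']
        have hcond : (2:ℝ)^(k+1)*R ≤ ‖(l : EuclideanSpace ℝ (Fin d))‖ ∧
            ‖(l : EuclideanSpace ℝ (Fin d))‖ < (2:ℝ)^(k+2)*R := by
          constructor
          · rw [hlx]
            exact mul_le_mul_of_nonneg_right hxlow hR0.le
          · rw [hlx]
            exact mul_lt_mul_of_pos_right hxhi hR0
        have hwkval : wk k l = ENNReal.ofReal ((C^2 * ((2:ℝ)^k*R) ^ (-β')) * (R^d * vr)) := by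
          simp only [hwk]
          exact if_pos hcond
        have hbig : u l ≤ wk k l := by
          rw [hwkval, hu]
          refine le_trans (hFarl _ h) (ENNReal.ofReal_le_ofReal ?_)
          have hdl : (2:ℝ)^k * R ≤ ‖(l : EuclideanSpace ℝ (Fin d))‖ / 2 := by
            have := hcond.1
            rw [show ((2:ℝ)^(k+1)) = 2 * 2^k by rw [pow_succ]; ring] at this
            linarith
        
          have hrp : (‖(l : EuclideanSpace ℝ (Fin d))‖/2) ^ (-β') ≤ ((2:ℝ)^k*R) ^ (-β') :=
            rpow_neg_anti (by positivity) hdl hb'0.le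
          have h9 : (0:ℝ) ≤ R^d * vr := by positivity
          have h8 : (0:ℝ) ≤ C^2 := by positivity
          exact mul_le_mul_of_nonneg_right (mul_le_mul_of_nonneg_left hrp h8) h9
        exact le_trans hbig (ENNReal.le_tsum k)
    have hfar : (∑' l, farf l) ≤ ∑' k : ℕ,
        ENNReal.ofReal (K * ((2:ℝ)^(k+2)*R) ^ α) *
          ENNReal.ofReal ((C^2 * ((2:ℝ)^k*R) ^ (-β')) * (R^d * vr)) := by
      calc (∑' l, farf l) ≤ ∑' l, ∑' k : ℕ, wk k l := ENNReal.tsum_le_tsum hfark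
        _ = ∑' k : ℕ, ∑' l, wk k l := ENNReal.tsum_comm
        _ ≤ _ := by
            apply ENNReal.tsum_le_tsum
            intro k
            have hpow1 : (1:ℝ) ≤ (2:ℝ)^(k+2) := one_le_pow₀ (by norm_num)
            apply hNsum ((2:ℝ)^(k+2)*R)
              (le_trans hRr₀ (le_mul_of_one_le_left hR0.le hpow1))
            · intro l
              simp only [hwk]
              by_cases hc : ((2:ℝ)^(k+1)*R ≤ ‖(l : EuclideanSpace ℝ (Fin d))‖ ∧
                  ‖(l : EuclideanSpace ℝ (Fin d))‖ < (2:ℝ)^(k+2)*R)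
              · rw [if_pos hc]
              · rw [if_neg hc]
                exact zero_le
            · intro l hl
              simp only [hwk]
              apply if_neg
              rintro ⟨_, h2⟩
              exact hl h2
    -- evaluate the geometric sum
    set Q : ℝ := K * 4^α * R^α * (C^2 * R ^ (-β') * (R^d * vr)) with hQ
    have hQ0 : 0 ≤ Q := by
      rw [hQ]
      have h7 : (0:ℝ) ≤ R^α := Real.rpow_nonneg hR0.le _
      have h6 : (0:ℝ) ≤ R^(-β') := Real.rpow_nonneg hR0.le _
      have h5 : (0:ℝ) ≤ 4^α := Real.rpow_nonneg (by norm_num) _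
      positivity
    have hkval : ∀ k : ℕ,
        ENNReal.ofReal (K * ((2:ℝ)^(k+2)*R) ^ α) *
          ENNReal.ofReal ((C^2 * ((2:ℝ)^k*R) ^ (-β')) * (R^d * vr))
        = ENNReal.ofReal Q * (ENNReal.ofReal ρ)^k := by
      intro k
      have h2k0 : (0:ℝ) < (2:ℝ)^k := by positivity
      have a1 : ((2:ℝ)^(k+2)*R) ^ α = ((2:ℝ)^(k+2)) ^ α * R^α :=
        Real.mul_rpow (by positivity) hR0.le
      have a2 : ((2:ℝ)^k*R) ^ (-β') = ((2:ℝ)^k) ^ (-β') * R ^ (-β') :=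
        Real.mul_rpow (by positivity) hR0.le
      have a3 : ((2:ℝ)^(k+2)) ^ α = ((2:ℝ)^k) ^ α * 4 ^ α := by
        rw [show ((2:ℝ)^(k+2)) = (2:ℝ)^k * 4 by rw [pow_succ, pow_succ]; ring,
          Real.mul_rpow (by positivity) (by norm_num)]
      have a4 : ((2:ℝ)^k) ^ α * ((2:ℝ)^k) ^ (-β') = ρ ^ k := by
        rw [← Real.rpow_add h2k0, show α + -β' = α - β' from by ring]
        have b1 : ((2:ℝ)^k : ℝ) ^ (α - β') = (2:ℝ) ^ ((k:ℝ) * (α - β')) := by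
          rw [← Real.rpow_natCast (2:ℝ) k, ← Real.rpow_mul (by norm_num)]
        have b2 : ρ ^ k = (2:ℝ) ^ ((α - β') * (k:ℝ)) := by
          rw [hρ, ← Real.rpow_natCast ((2:ℝ) ^ (α - β')) k, ← Real.rpow_mul (by norm_num)]
        rw [b1, b2]
        congr 1
        ring
      rw [← ENNReal.ofReal_mul (by positivity), ← ENNReal.ofReal_pow hρ0,
        ← ENNReal.ofReal_mul hQ0]
      congr 1
      rw [a1, a2, a3, hQ]
      calc K * (((2:ℝ)^k) ^ α * 4 ^ α * R^α) * (C^2 * (((2:ℝ)^k) ^ (-β') * R ^ (-β')) * (R^d * vr))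
          = K * 4^α * R^α * (C^2 * R ^ (-β') * (R^d * vr)) *
            (((2:ℝ)^k) ^ α * ((2:ℝ)^k) ^ (-β')) := by ring
        _ = K * 4 ^ α * R ^ α * (C ^ 2 * R ^ (-β') * (R ^ d * vr)) * ρ ^ k := by rw [a4]
    have hgeo : (∑' k : ℕ, ENNReal.ofReal (K * ((2:ℝ)^(k+2)*R) ^ α) *
        ENNReal.ofReal ((C^2 * ((2:ℝ)^k*R) ^ (-β')) * (R^d * vr)))
        = ENNReal.ofReal Q * Gρ := by
      rw [tsum_congr hkval, ENNReal.tsum_mul_left, ENNReal.tsum_geometric, hGρ]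
    -- put everything together, in ℝ
    have htotal : ENNReal.ofReal (A * Φ * (R^d * vr)) ≤
        ENNReal.ofReal (K * (3*R) ^ α * (E₁ * (3*R) ^ ((d:ℝ) - β')) + Q * GρR) := by
      have h1 : ENNReal.ofReal (A * Φ) * volume (ball (0 : EuclideanSpace ℝ (Fin d)) R)
          = ENNReal.ofReal (A * Φ * (R^d * vr)) := by
        rw [hvol R hR0.le, ← ENNReal.ofReal_mul (by positivity)]
      rw [← h1]
      calc ENNReal.ofReal (A * Φ) * volume (ball (0 : EuclideanSpace ℝ (Fin d)) R)
          ≤ ∑' l, u l := hLHS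
        _ = (∑' l, nearf l) + ∑' l, farf l := hufsplit
        _ ≤ (ENNReal.ofReal (K * (3*R) ^ α) * ENNReal.ofReal (E₁ * (3*R) ^ ((d:ℝ) - β'))) +
            ENNReal.ofReal Q * Gρ := by
            apply add_le_add hnear
            rw [← hgeo]
            exact hfar
        _ = ENNReal.ofReal (K * (3*R) ^ α * (E₁ * (3*R) ^ ((d:ℝ) - β'))) +
            ENNReal.ofReal (Q * GρR) := by
            rw [← ENNReal.ofReal_mul (by positivity), hGρReq,
              ← ENNReal.ofReal_mul hQ0]
        _ = ENNReal.ofReal (K * (3*R) ^ α * (E₁ * (3*R) ^ ((d:ℝ) - β')) + Q * GρR) := by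
            rw [← ENNReal.ofReal_add (by positivity) (mul_nonneg hQ0 hGρR0)]
    have hrhs0 : (0:ℝ) ≤ K * (3*R) ^ α * (E₁ * (3*R) ^ ((d:ℝ) - β')) + Q * GρR := by
      have h4 : (0:ℝ) ≤ (3*R) ^ α := Real.rpow_nonneg (by linarith) _
      have h3 : (0:ℝ) ≤ (3*R) ^ ((d:ℝ) - β') := Real.rpow_nonneg (by linarith) _
      have := mul_nonneg hQ0 hGρR0
      have := mul_nonneg (mul_nonneg hK0 h4) (mul_nonneg hE₁0 h3)
      linarith
    have hreal : A * Φ * (R^d * vr) ≤ K * (3*R) ^ α * (E₁ * (3*R) ^ ((d:ℝ) - β')) + Q * GρR :=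
      (ENNReal.ofReal_le_ofReal_iff hrhs0).mp htotal
    -- final algebra
    have i1 : (3*R) ^ α = 3 ^ α * R ^ α := Real.mul_rpow (by norm_num) hR0.le
    have i2 : (3*R) ^ ((d:ℝ) - β') = 3 ^ ((d:ℝ) - β') * R ^ ((d:ℝ) - β') :=
      Real.mul_rpow (by norm_num) hR0.le
    have i3 : R ^ ((d:ℝ) - β') = R^d * R ^ (-β') := by
      rw [← Real.rpow_natCast R d, ← Real.rpow_add hR0, sub_eq_add_neg]
    have i4 : R ^ α * R ^ (-β') = R ^ (α - β') := by
      rw [← Real.rpow_add hR0, sub_eq_add_neg]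
    have h2 : A * Φ * vr * R^d ≤ (P * (R ^ α * R ^ (-β'))) * R^d := by
      calc A * Φ * vr * R^d = A * Φ * (R^d * vr) := by ring
        _ ≤ K * (3*R) ^ α * (E₁ * (3*R) ^ ((d:ℝ) - β')) + Q * GρR := hreal
        _ = (P * (R ^ α * R ^ (-β'))) * R^d := by
            rw [i1, i2, i3, hP, hQ]
            ring
    have h1 := le_of_mul_le_mul_right h2 (pow_pos hR0 d)
    rwa [i4] at h1
  -- contradiction by letting R → ∞
  have htend : Filter.Tendsto (fun R : ℝ => P * R ^ (α - β')) Filter.atTop (nhds 0) := by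
    have h := (tendsto_rpow_neg_atTop (show (0:ℝ) < β' - α by linarith)).const_mul P
    simp only [neg_sub, mul_zero] at h
    exact h
  have hle : A * Φ * vr ≤ 0 :=
    ge_of_tendsto htend (Filter.eventually_atTop.mpr ⟨r₀, fun R hR => main R hR⟩)
  have : 0 < A * Φ * vr := by positivity
  linarith
end

section
/- Let ν be a finite complex Borel measure on ℝ^d, 0 < β ≤ d, satisfying |ν̂(t)| ≤ C₁|t|^{−β/2} for all t ≠ 0. Let Λ ⊂ ℝ^d satisfy #(Λ ∩ B(0,r)) ≤ C r^α for all r ≥ 1 with α < β. Then for any R ≥ 1 and any point t₀ with |t₀ − λ| ≥ T for all λ ∈ Λ ∩ B(0,R) (where 1 ≤ T ≤ R), one has Σ_{λ∈Λ} |ν̂(t₀−λ)|² ≤ C' (R^α T^{−β} + R^{α−β}) for a constant C' depending only on C, C₁, α, β. -/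
open MeasureTheory Complex

open scoped ENNReal

lemma aux_card_tsum {E : Type*} {s : Set E} (hs : s.Finite) (g : E → ℝ) {N B : ℝ}
    (hN : (s.ncard : ℝ) ≤ N) (hg : ∀ l ∈ s, g l ≤ B) :
    ∑' (l : s), ENNReal.ofReal (g l) ≤ ENNReal.ofReal (N * B) := by
  haveI := hs.fintype
  calc ∑' (l : s), ENNReal.ofReal (g l) = ∑ l : s, ENNReal.ofReal (g l) := tsum_fintype _
    _ ≤ ∑ _l : s, ENNReal.ofReal B :=
        Finset.sum_le_sum fun i _ => ENNReal.ofReal_le_ofReal (hg i i.2)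
    _ = (Fintype.card s : ℝ≥0∞) * ENNReal.ofReal B := by
        rw [Finset.sum_const, nsmul_eq_mul, Finset.card_univ]
    _ ≤ ENNReal.ofReal N * ENNReal.ofReal B := by
        gcongr
        rw [← ENNReal.ofReal_natCast]
        apply ENNReal.ofReal_le_ofReal
        rwa [Set.ncard_eq_toFinset_card' s, Set.toFinset_card] at hN
    _ = ENNReal.ofReal (N * B) := (ENNReal.ofReal_mul (le_trans (Nat.cast_nonneg _) hN)).symm

lemma aux_exp (α β R : ℝ) (hR : 0 < R) (k : ℕ) :
    ((2:ℝ)^(k+1)*R)^α * ((2:ℝ)^k*R/2)^(-β) = ((2:ℝ)^(α+β) * R^(α-β)) * ((2:ℝ)^(α-β))^k := by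
  have e1 : ((2:ℝ)^(k+1)*R)^α = 2^(((k:ℝ)+1)*α) * R^α := by
    rw [Real.mul_rpow (by positivity) hR.le, ← Real.rpow_natCast (2:ℝ) (k+1),
      ← Real.rpow_mul (by norm_num)]
    push_cast; ring_nf
  have e2 : ((2:ℝ)^k*R/2)^(-β) = 2^((k:ℝ)*(-β) + β) * R^(-β) := by
    rw [div_eq_mul_inv, Real.mul_rpow (by positivity) (by norm_num),
      Real.mul_rpow (by positivity) hR.le, ← Real.rpow_natCast (2:ℝ) k,
      ← Real.rpow_mul (by norm_num), ← Real.rpow_neg_one (2:ℝ),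
      ← Real.rpow_mul (by norm_num), Real.rpow_add two_pos]
    ring_nf
  have e3 : ((2:ℝ)^(α-β))^k = 2^((α-β)*(k:ℝ)) := by
    rw [← Real.rpow_natCast ((2:ℝ)^(α-β)) k, ← Real.rpow_mul (by norm_num)]
  rw [e1, e2, e3, mul_mul_mul_comm, ← Real.rpow_add two_pos, ← Real.rpow_add hR,
    mul_right_comm, ← Real.rpow_add two_pos,
    show (((k:ℝ)+1)*α + ((k:ℝ)*(-β) + β)) = (α+β) + (α-β)*(k:ℝ) by ring,
    show (α + -β) = α - β by ring]


/-- Tail estimate: if a finite complex measure `ν` (given by an integrable density `φ` with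
respect to a finite positive measure `μ`) has Fourier decay `|ν̂(t)| ≤ C₁|t|^{−β/2}` and
`#(Λ ∩ B(0,r)) ≤ C r^α` with `α < β`, then for `1 ≤ T ≤ R` and any `t₀ ∈ B(0, R/2)` at
distance `≥ T` from `Λ ∩ B(0,R)` one has
`Σ_{λ∈Λ} |ν̂(t₀−λ)|² ≤ C' (R^α T^{−β} + R^{α−β})`. -/
theorem tail_sum_estimate {d : ℕ} (μ : Measure (EuclideanSpace ℝ (Fin d)))
    [IsFiniteMeasure μ] (φ : EuclideanSpace ℝ (Fin d) → ℂ)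
    (hφ : MeasureTheory.Integrable φ μ)
    (β : ℝ) (hβ0 : 0 < β) (hβd : β ≤ (d : ℝ)) (C₁ : ℝ)
    (hdecay : ∀ t : EuclideanSpace ℝ (Fin d), t ≠ 0 →
      ‖∫ x, Complex.exp ((((-2) * Real.pi * (inner ℝ t x : ℝ) : ℝ) : ℂ) * Complex.I) * φ x ∂μ‖
        ≤ C₁ * ‖t‖ ^ (-(β / 2)))
    (Λ : Set (EuclideanSpace ℝ (Fin d))) (C α : ℝ) (hαβ : α < β)
    (hcount : ∀ r : ℝ, 1 ≤ r →
      (Λ ∩ Metric.ball (0 : EuclideanSpace ℝ (Fin d)) r).Finite ∧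
      ((Λ ∩ Metric.ball (0 : EuclideanSpace ℝ (Fin d)) r).ncard : ℝ) ≤ C * r ^ α) :
    ∃ C' : ℝ, 0 < C' ∧ ∀ R T : ℝ, 1 ≤ R → 1 ≤ T → T ≤ R →
      ∀ t₀ : EuclideanSpace ℝ (Fin d), ‖t₀‖ ≤ R / 2 →
        (∀ l ∈ Λ ∩ Metric.ball (0 : EuclideanSpace ℝ (Fin d)) R, T ≤ ‖t₀ - l‖) →
        (∑' l : Λ, ‖∫ x, Complex.exp ((((-2) * Real.pi *
            (inner ℝ (t₀ - (l : EuclideanSpace ℝ (Fin d))) x : ℝ) : ℝ) : ℂ) * Complex.I)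
              * φ x ∂μ‖ ^ 2)
          ≤ C' * (R ^ α * T ^ (-β) + R ^ (α - β)) := by
  set C₀ : ℝ := max C 0 with hC₀def
  have hC₀ : 0 ≤ C₀ := le_max_right _ _
  set q : ℝ := (2:ℝ) ^ (α - β) with hqdef
  have hq0 : 0 ≤ q := Real.rpow_nonneg (by norm_num) _
  have hq1 : q < 1 := Real.rpow_lt_one_of_one_lt_of_neg one_lt_two (by linarith)
  set A₁ : ℝ := C₀ * C₁ ^ 2 with hA₁def
  set A₂ : ℝ := C₀ * C₁ ^ 2 * (2:ℝ) ^ (α + β) * (1 - q)⁻¹ with hA₂def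
  have hA₁ : 0 ≤ A₁ := mul_nonneg hC₀ (sq_nonneg _)
  have hA₂ : 0 ≤ A₂ := by
    apply mul_nonneg (mul_nonneg hA₁ (Real.rpow_nonneg (by norm_num) _))
    rw [inv_nonneg]; linarith
  refine ⟨max A₁ A₂ + 1, by positivity, ?_⟩
  set C' : ℝ := max A₁ A₂ + 1 with hC'def
  have hA₁C' : A₁ ≤ C' := le_trans (le_max_left _ _) (by linarith)
  have hA₂C' : A₂ ≤ C' := le_trans (le_max_right _ _) (by linarith)
  have hC' : 0 < C' := by positivity
  intro R T hR1 hT1 hTR t₀ ht₀ hsep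
  have hR0 : (0:ℝ) < R := lt_of_lt_of_le one_pos hR1
  have hT0 : (0:ℝ) < T := lt_of_lt_of_le one_pos hT1
  set g : EuclideanSpace ℝ (Fin d) → ℝ := fun l => ‖∫ x, Complex.exp ((((-2) * Real.pi *
      (inner ℝ (t₀ - l) x : ℝ) : ℝ) : ℂ) * Complex.I) * φ x ∂μ‖ ^ 2 with hgdef
  have hg0 : ∀ l : EuclideanSpace ℝ (Fin d), 0 ≤ g l := fun l => by positivity
  -- pointwise bound
  have hpt : ∀ (l : EuclideanSpace ℝ (Fin d)) (s : ℝ), 0 < s → s ≤ ‖t₀ - l‖ → g l ≤ C₁ ^ 2 * s ^ (-β) := by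
    intro l s hs hsl
    have hne : t₀ - l ≠ 0 := by
      intro h; rw [h, norm_zero] at hsl; linarith
    have hpos : 0 < ‖t₀ - l‖ := lt_of_lt_of_le hs hsl
    show ‖∫ x, Complex.exp ((((-2) * Real.pi *
      (inner ℝ (t₀ - l) x : ℝ) : ℝ) : ℂ) * Complex.I) * φ x ∂μ‖ ^ 2 ≤ C₁ ^ 2 * s ^ (-β)
    calc ‖∫ x, Complex.exp ((((-2) * Real.pi *
      (inner ℝ (t₀ - l) x : ℝ) : ℝ) : ℂ) * Complex.I) * φ x ∂μ‖ ^ 2 ≤ (C₁ * ‖t₀ - l‖ ^ (-(β/2))) ^ 2 :=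
          pow_le_pow_left₀ (norm_nonneg _) (hdecay (t₀ - l) hne) 2
      _ = C₁ ^ 2 * (‖t₀ - l‖ ^ (-(β/2))) ^ 2 := by ring
      _ = C₁ ^ 2 * ‖t₀ - l‖ ^ (-β) := by
          rw [← Real.rpow_natCast (‖t₀ - l‖ ^ (-(β/2))) 2, ← Real.rpow_mul hpos.le]
          norm_num
      _ ≤ C₁ ^ 2 * s ^ (-β) := by
          apply mul_le_mul_of_nonneg_left _ (sq_nonneg C₁)
          exact Real.rpow_le_rpow_of_nonpos hs hsl (by linarith)
  -- shells
  set S : ℕ → Set (EuclideanSpace ℝ (Fin d)) := fun k => match k with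
    | 0 => Metric.ball (0 : EuclideanSpace ℝ (Fin d)) R
    | (j+1) => Metric.ball (0 : EuclideanSpace ℝ (Fin d)) ((2:ℝ)^(j+1)*R) \ Metric.ball (0 : EuclideanSpace ℝ (Fin d)) ((2:ℝ)^j*R)
    with hSdef
  have hcover : ∀ x : EuclideanSpace ℝ (Fin d), ∃ k, x ∈ S k := by
    intro x
    have hex : ∃ n : ℕ, ‖x‖ < 2 ^ n * R := by
      obtain ⟨n, hn⟩ := pow_unbounded_of_one_lt ‖x‖ (one_lt_two (α := ℝ))
      exact ⟨n, hn.trans_le (le_mul_of_one_le_right (by positivity) hR1)⟩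
    refine ⟨Nat.find hex, ?_⟩
    have hspec := Nat.find_spec hex
    cases hk : Nat.find hex with
    | zero =>
      rw [hk] at hspec
      simpa [S, mem_ball_zero_iff] using (by simpa using hspec : ‖x‖ < R)
    | succ j =>
      have hmin : ¬ (‖x‖ < 2 ^ j * R) := Nat.find_min hex (by omega)
      rw [hk] at hspec
      exact ⟨mem_ball_zero_iff.2 hspec, fun h => hmin (mem_ball_zero_iff.1 h)⟩
  have hsub : Λ ⊆ ⋃ k, (Λ ∩ S k) := by
    intro x hx
    obtain ⟨k, hk⟩ := hcover x
    exact Set.mem_iUnion.2 ⟨k, hx, hk⟩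
  -- shell bounds
  set b : ℕ → ℝ := fun k => match k with
    | 0 => (C₀ * R ^ α) * (C₁ ^ 2 * T ^ (-β))
    | (j+1) => (A₁ * (2:ℝ)^(α+β) * R^(α-β)) * q ^ j
    with hbdef
  have hb0 : ∀ k, 0 ≤ b k := by
    intro k
    cases k with
    | zero =>
      exact mul_nonneg (mul_nonneg hC₀ (Real.rpow_nonneg hR0.le _))
        (mul_nonneg (sq_nonneg _) (Real.rpow_nonneg hT0.le _))
    | succ j =>
      exact mul_nonneg (mul_nonneg (mul_nonneg hA₁ (Real.rpow_nonneg (by norm_num) _))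
        (Real.rpow_nonneg hR0.le _)) (pow_nonneg hq0 _)
  have h2 : ∀ k : ℕ, (∑' (l : ↥(Λ ∩ S k)), ENNReal.ofReal (g l)) ≤ ENNReal.ofReal (b k) := by
    intro k
    cases k with
    | zero =>
      have hfin := (hcount R hR1).1
      have hcard : ((Λ ∩ Metric.ball (0 : EuclideanSpace ℝ (Fin d)) R).ncard : ℝ) ≤ C₀ * R ^ α := by
        refine le_trans (hcount R hR1).2 ?_
        exact mul_le_mul_of_nonneg_right (le_max_left _ _) (Real.rpow_nonneg hR0.le _)
      exact aux_card_tsum hfin g hcard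
        (fun l hl => hpt l T hT0 (hsep l hl))
    | succ j =>
      have hr1 : (1:ℝ) ≤ (2:ℝ)^(j+1) * R :=
        le_trans hR1 (le_mul_of_one_le_left hR0.le (one_le_pow₀ one_le_two))
      have hfin := (hcount _ hr1).1
      have hsubball : Λ ∩ S (j+1) ⊆ Λ ∩ Metric.ball (0 : EuclideanSpace ℝ (Fin d)) ((2:ℝ)^(j+1)*R) :=
        fun x hx => ⟨hx.1, hx.2.1⟩
      have hcard : ((Λ ∩ S (j+1)).ncard : ℝ) ≤ C₀ * ((2:ℝ)^(j+1)*R) ^ α := by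
        refine le_trans ?_ (le_trans (hcount _ hr1).2
          (mul_le_mul_of_nonneg_right (le_max_left _ _) (Real.rpow_nonneg (by positivity) _)))
        exact_mod_cast Nat.cast_le.2 (Set.ncard_le_ncard hsubball hfin)
      have hglb : ∀ l ∈ Λ ∩ S (j+1), g l ≤ C₁ ^ 2 * ((2:ℝ)^j*R/2) ^ (-β) := by
        intro l hl
        have hnorm : (2:ℝ)^j * R ≤ ‖l‖ := by
          have := hl.2.2
          rw [mem_ball_zero_iff] at this
          push_neg at this; exact this
        have hlow : (2:ℝ)^j*R/2 ≤ ‖t₀ - l‖ := by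
          have h1 : ‖l‖ - ‖t₀‖ ≤ ‖t₀ - l‖ := by
            rw [norm_sub_rev]; exact norm_sub_norm_le _ _
          have h2 : (1:ℝ) ≤ (2:ℝ)^j := one_le_pow₀ one_le_two
          nlinarith
        exact hpt l _ (by positivity) hlow
      refine le_trans (aux_card_tsum (hfin.subset hsubball) g hcard hglb) ?_
      apply ENNReal.ofReal_le_ofReal
      have heq := aux_exp α β R hR0 j
      refine le_of_eq ?_
      show C₀ * ((2:ℝ)^(j+1)*R) ^ α * (C₁ ^ 2 * ((2:ℝ)^j*R/2) ^ (-β))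
          = (A₁ * (2:ℝ)^(α+β) * R^(α-β)) * q ^ j
      calc C₀ * ((2:ℝ)^(j+1)*R) ^ α * (C₁ ^ 2 * ((2:ℝ)^j*R/2) ^ (-β))
          = (C₀ * C₁ ^ 2) * (((2:ℝ)^(j+1)*R) ^ α * ((2:ℝ)^j*R/2) ^ (-β)) := by ring
        _ = (A₁ * (2:ℝ)^(α+β) * R^(α-β)) * q ^ j := by rw [heq, hA₁def]; ring
  -- summability of b and its sum
  have hbs1 : Summable (fun n : ℕ => b (n+1)) := by
    have : Summable (fun n : ℕ => (A₁ * (2:ℝ)^(α+β) * R^(α-β)) * q ^ n) :=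
      (summable_geometric_of_lt_one hq0 hq1).mul_left _
    exact this.congr fun n => rfl
  have hbs : Summable b := (summable_nat_add_iff 1).mp hbs1
  have hbsum : ∑' k, b k = A₁ * (R ^ α * T ^ (-β)) + (A₁ * (2:ℝ)^(α+β) * (1-q)⁻¹) * R^(α-β) := by
    rw [Summable.tsum_eq_zero_add hbs]
    have : ∑' n : ℕ, b (n+1) = ∑' n : ℕ, (A₁ * (2:ℝ)^(α+β) * R^(α-β)) * q ^ n :=
      tsum_congr fun n => rfl
    rw [this, tsum_mul_left, tsum_geometric_of_lt_one hq0 hq1]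
    show (C₀ * R ^ α) * (C₁ ^ 2 * T ^ (-β)) + _ = _
    rw [hA₁def]; ring
  set M : ℝ := C' * (R ^ α * T ^ (-β) + R ^ (α - β)) with hMdef
  have hXY : 0 ≤ R ^ α * T ^ (-β) ∧ 0 ≤ R ^ (α - β) :=
    ⟨mul_nonneg (Real.rpow_nonneg hR0.le _) (Real.rpow_nonneg hT0.le _),
      Real.rpow_nonneg hR0.le _⟩
  have hM0 : 0 ≤ M := mul_nonneg hC'.le (add_nonneg hXY.1 hXY.2)
  have hbM : ∑' k, b k ≤ M := by
    rw [hbsum, hMdef, mul_add]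
    have e2 : A₁ * (2:ℝ)^(α+β) * (1-q)⁻¹ = A₂ := by rw [hA₂def, hA₁def]
    rw [e2]
    exact add_le_add (mul_le_mul_of_nonneg_right hA₁C' hXY.1)
      (mul_le_mul_of_nonneg_right hA₂C' hXY.2)
  -- ENNReal chain
  have hEN : (∑' (l : Λ), ENNReal.ofReal (g ↑l)) ≤ ENNReal.ofReal M := by
    calc ∑' (l : Λ), ENNReal.ofReal (g ↑l)
        ≤ ∑' (l : ↥(⋃ k, (Λ ∩ S k))), ENNReal.ofReal (g ↑l) :=
          ENNReal.tsum_mono_subtype (fun l => ENNReal.ofReal (g l)) hsub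
      _ ≤ ∑' k, ∑' (l : ↥(Λ ∩ S k)), ENNReal.ofReal (g ↑l) :=
          ENNReal.tsum_iUnion_le_tsum (fun l => ENNReal.ofReal (g l)) _
      _ ≤ ∑' k, ENNReal.ofReal (b k) := ENNReal.tsum_le_tsum h2
      _ = ENNReal.ofReal (∑' k, b k) := (ENNReal.ofReal_tsum_of_nonneg hb0 hbs).symm
      _ ≤ ENNReal.ofReal M := ENNReal.ofReal_le_ofReal hbM
  -- back to ℝ
  have main : (∑' l : Λ, g ↑l) ≤ M := by
    by_cases hsum : Summable (fun l : Λ => g ↑l)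
    · have e := ENNReal.ofReal_tsum_of_nonneg (fun l : Λ => hg0 ↑l) hsum
      exact (ENNReal.ofReal_le_ofReal_iff hM0).mp (e ▸ hEN)
    · rw [tsum_eq_zero_of_not_summable hsum]; exact hM0
  exact main
end
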